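/- arXiv:2411.09832 — 4 statements merged into one kernel-verified Lean document; each statement's English description precedes it below -/
import Mathlib

section
/- Let 𝕀 be an interval hypergraph on [n], A an acyclic orientation of 𝕀, and 1 ≤ i < j ≤ n such that some I ∈ 𝕀 satisfies A(I) = i and j ∈ I. Let B be the orientation obtained from A by flipping i to j, i.e., B(H) = j if A(H) = i and j ∈ H, and B(H) = A(H) otherwise, and let k = max {max(I) : I ∈ 𝕀, A(I) = i}. Then B is acyclic if and only if there is no J ∈ 𝕀 with j ∈ J ∖ {A(J)} and A(J) ∈ (i, k] (i.e., i < A(J) ≤ k). -/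
namespace IHL

/-- The hyperedges of a hypergraph, as a subtype. -/
abbrev Edge (𝕀 : Finset (Finset ℕ)) : Type := {H : Finset ℕ // H ∈ 𝕀}

/-- `ℋ` is a hypergraph on `[n] = {1,…,n}`: hyperedges are nonempty subsets of `[n]`
and all singletons belong to `ℋ`. -/
def IsHypergraph (n : ℕ) (ℋ : Finset (Finset ℕ)) : Prop :=
  (∀ H ∈ ℋ, H.Nonempty ∧ H ⊆ Finset.Icc 1 n) ∧
    ∀ i, 1 ≤ i → i ≤ n → ({i} : Finset ℕ) ∈ ℋ

/-- `𝕀` is an interval hypergraph on `[n]`: hyperedges are intervals `[a,b] ⊆ [n]`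
and all singletons belong to `𝕀`. -/
def IsIntervalHypergraph (n : ℕ) (𝕀 : Finset (Finset ℕ)) : Prop :=
  (∀ H ∈ 𝕀, ∃ a b, 1 ≤ a ∧ a ≤ b ∧ b ≤ n ∧ H = Finset.Icc a b) ∧
    ∀ i, 1 ≤ i → i ≤ n → ({i} : Finset ℕ) ∈ 𝕀

/-- An orientation assigns to each hyperedge one of its elements. -/
def IsOrientation (𝕀 : Finset (Finset ℕ)) (O : Edge 𝕀 → ℕ) : Prop :=
  ∀ H : Edge 𝕀, O H ∈ H.1

/-- Acyclicity: there is no cyclic sequence `H_0, …, H_k` with `k ≥ 2`, `H_k = H_0`, and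
`O (H (p+1)) ∈ H p \ {O (H p)}` for all `p < k`. -/
def IsAcyclic (𝕀 : Finset (Finset ℕ)) (O : Edge 𝕀 → ℕ) : Prop :=
  ¬∃ (k : ℕ) (H : ℕ → Edge 𝕀), 2 ≤ k ∧ H k = H 0 ∧
    ∀ p < k, O (H (p + 1)) ∈ (H p).1 ∧ O (H (p + 1)) ≠ O (H p)

/-- An acyclic orientation, i.e. an element of the hypergraphic poset. -/
def AcycOr (𝕀 : Finset (Finset ℕ)) (O : Edge 𝕀 → ℕ) : Prop :=
  IsOrientation 𝕀 O ∧ IsAcyclic 𝕀 O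

/-- Increasing flip from `O` to `O'` flipping `i` to `j`. -/
def IsIncFlip (n : ℕ) (𝕀 : Finset (Finset ℕ)) (i j : ℕ) (O O' : Edge 𝕀 → ℕ) : Prop :=
  O ≠ O' ∧ 1 ≤ i ∧ i < j ∧ j ≤ n ∧
    ∀ H : Edge 𝕀,
      (O H ≠ O' H → O H = i ∧ O' H = j) ∧
      (i ∈ H.1 → j ∈ H.1 → (O H = i ↔ O' H = j))

/-- One increasing flip step between acyclic orientations. -/
def FlipStep (n : ℕ) (𝕀 : Finset (Finset ℕ)) (O O' : Edge 𝕀 → ℕ) : Prop :=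
  AcycOr 𝕀 O ∧ AcycOr 𝕀 O' ∧ ∃ i j, IsIncFlip n 𝕀 i j O O'

/-- The order of the hypergraphic poset `P_𝕀`: reflexive-transitive closure of
the increasing flip relation on acyclic orientations. -/
def leP (n : ℕ) (𝕀 : Finset (Finset ℕ)) : (Edge 𝕀 → ℕ) → (Edge 𝕀 → ℕ) → Prop :=
  Relation.ReflTransGen (FlipStep n 𝕀)

/-- Strict order of the hypergraphic poset. -/
def ltP (n : ℕ) (𝕀 : Finset (Finset ℕ)) (A B : Edge 𝕀 → ℕ) : Prop :=
  leP n 𝕀 A B ∧ A ≠ B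

/-- `B` covers `A` in `P_𝕀`. -/
def CoversP (n : ℕ) (𝕀 : Finset (Finset ℕ)) (A B : Edge 𝕀 → ℕ) : Prop :=
  ltP n 𝕀 A B ∧ ¬∃ C, AcycOr 𝕀 C ∧ ltP n 𝕀 A C ∧ ltP n 𝕀 C B

/-- `𝕀` is closed under intersection. -/
def ClosedUnderIntersection (𝕀 : Finset (Finset ℕ)) : Prop :=
  ∀ I ∈ 𝕀, ∀ J ∈ 𝕀, (I ∩ J).Nonempty → I ∩ J ∈ 𝕀

/-- `π` is a permutation of `[n]` (it fixes everything outside `[1,n]`). -/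
def IsPermOn (n : ℕ) (π : Equiv.Perm ℕ) : Prop :=
  ∀ x, x ∉ Finset.Icc 1 n → π x = x

/-- The surjection `Or` from permutations to acyclic orientations:
`Or_π (H) = π (min {p : π p ∈ H})`. -/
noncomputable def orMap (𝕀 : Finset (Finset ℕ)) (π : Equiv.Perm ℕ) : Edge 𝕀 → ℕ :=
  fun H => π (sInf {p | π p ∈ H.1})

/-- The weak order on permutations of `[n]`, via inclusion of inversion sets. -/
def weakLe (n : ℕ) (σ τ : Equiv.Perm ℕ) : Prop :=
  ∀ a b, 1 ≤ a → a < b → b ≤ n → σ.symm b < σ.symm a → τ.symm b < τ.symm a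

/-- `π` contains the pattern 231. -/
def Contains231 (n : ℕ) (π : Equiv.Perm ℕ) : Prop :=
  ∃ p q r, 1 ≤ p ∧ p < q ∧ q < r ∧ r ≤ n ∧ π r < π p ∧ π p < π q

/-- `π` contains the pattern 213. -/
def Contains213 (n : ℕ) (π : Equiv.Perm ℕ) : Prop :=
  ∃ p q r, 1 ≤ p ∧ p < q ∧ q < r ∧ r ≤ n ∧ π q < π p ∧ π p < π r

/-- The partial order `≺_A`: transitive closure of `A H ≺ h` for `h ∈ H \ {A H}`. -/
def prec (𝕀 : Finset (Finset ℕ)) (A : Edge 𝕀 → ℕ) : ℕ → ℕ → Prop :=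
  Relation.TransGen fun a b => ∃ H : Edge 𝕀, A H = a ∧ b ∈ H.1 ∧ b ≠ a

/-- The distributivity condition on interval hypergraphs: for all `I, J ∈ 𝕀` with
`I ⊈ J`, `J ⊈ I` and `I ∩ J ≠ ∅`, the intersection `I ∩ J` is in `𝕀` and is initial
or final in any `K ∈ 𝕀` containing it. -/
def IsDistribHG (𝕀 : Finset (Finset ℕ)) : Prop :=
  ∀ I ∈ 𝕀, ∀ J ∈ 𝕀, ¬I ⊆ J → ¬J ⊆ I → (I ∩ J).Nonempty →
    (I ∩ J ∈ 𝕀 ∧ ∀ K ∈ 𝕀, I ∩ J ⊆ K → ((I ∩ J).min = K.min ∨ (I ∩ J).max = K.max))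

/-- `j ∈ 𝒥_𝕀 = ⋃_{I ∈ 𝕀} (I \ {min I})`. -/
def InJI (𝕀 : Finset (Finset ℕ)) (j : ℕ) : Prop :=
  ∃ I ∈ 𝕀, j ∈ I ∧ ∃ y ∈ I, y < j

/-- `Jj` is the interval `J_j = ⋂ {I ∈ 𝕀 : j ∈ I \ {min I}}`. -/
def IsJj (𝕀 : Finset (Finset ℕ)) (j : ℕ) (Jj : Finset ℕ) : Prop :=
  ∀ x, x ∈ Jj ↔ ∀ I ∈ 𝕀, j ∈ I → (∃ y ∈ I, y < j) → x ∈ I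

/-- `Aj` is the orientation `A_j` (where `μj = min J_j`):
`A_j (J) = j` if `j ∈ J` and `min J = μ_j`, and `A_j (J) = min J` otherwise. -/
def IsAj (𝕀 : Finset (Finset ℕ)) (j μj : ℕ) (Aj : Edge 𝕀 → ℕ) : Prop :=
  ∀ J : Edge 𝕀,
    (j ∈ J.1 ∧ IsLeast (J.1 : Set ℕ) μj → Aj J = j) ∧
    (¬(j ∈ J.1 ∧ IsLeast (J.1 : Set ℕ) μj) → IsLeast (J.1 : Set ℕ) (Aj J))

/-- `Jij` is the interval `J_{ij} = ⋂ {I ∈ 𝕀 : {i,j} ⊆ I}`. -/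
def IsJij (𝕀 : Finset (Finset ℕ)) (i j : ℕ) (Jij : Finset ℕ) : Prop :=
  ∀ x, x ∈ Jij ↔ ∀ I ∈ 𝕀, i ∈ I → j ∈ I → x ∈ I

/-- `(i,j) ∈ ℐ𝒥_𝕀`, where `μij = min J_{ij}`: both lie in a common hyperedge and
`i = max ([μ_{ij}, j) \ ⋃ {J \ {min J} : J ∈ 𝕀, J ⊆ [μ_{ij}, j)})`. -/
def InIJ (n : ℕ) (𝕀 : Finset (Finset ℕ)) (i j μij : ℕ) : Prop :=
  1 ≤ i ∧ i < j ∧ j ≤ n ∧ (∃ I ∈ 𝕀, i ∈ I ∧ j ∈ I) ∧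
    IsGreatest {m | μij ≤ m ∧ m < j ∧
      ∀ J ∈ 𝕀, (∀ x ∈ J, μij ≤ x ∧ x < j) → m ∈ J → ∀ y ∈ J, m ≤ y} i

/-- `Aij` is the orientation `A_{ij}` (where `μij = min J_{ij}`):
`A_{ij} (J) = j` if `j ∈ J` and `min J ≥ μ_{ij}`, and `A_{ij} (J) = min J` otherwise. -/
def IsAij (𝕀 : Finset (Finset ℕ)) (j μij : ℕ) (Aij : Edge 𝕀 → ℕ) : Prop :=
  ∀ J : Edge 𝕀,
    (j ∈ J.1 ∧ (∀ x ∈ J.1, μij ≤ x) → Aij J = j) ∧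
    (¬(j ∈ J.1 ∧ (∀ x ∈ J.1, μij ≤ x)) → IsLeast (J.1 : Set ℕ) (Aij J))

/-- The reversal `x ↦ n - x + 1` on `[n]`. -/
def revPt (n x : ℕ) : ℕ := n - x + 1

/-- The reversed hypergraph `ℋ↔`. -/
def revHG (n : ℕ) (ℋ : Finset (Finset ℕ)) : Finset (Finset ℕ) :=
  ℋ.image fun H => H.image (revPt n)


private lemma exists_seq_of_transGen {r : ℕ → ℕ → Prop} {x y : ℕ}
    (h : Relation.TransGen r x y) :
    ∃ m, 1 ≤ m ∧ ∃ f : ℕ → ℕ, f 0 = x ∧ f m = y ∧ ∀ p < m, r (f p) (f (p + 1)) := by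
  induction h with
  | @single c h =>
    refine ⟨1, le_refl _, fun p => if p = 0 then x else c, by simp, by simp, ?_⟩
    intro p hp
    have : p = 0 := by omega
    subst this
    simpa using h
  | @tail b c h1 h2 ih =>
    obtain ⟨m, hm, f, hf0, hfm, hstep⟩ := ih
    refine ⟨m + 1, by omega, fun p => if p = m + 1 then c else f p, by simp [hf0], by simp, ?_⟩
    intro p hp
    rcases Nat.lt_or_ge p m with h | h
    · have e1 : p ≠ m + 1 := by omega
      have e2 : p + 1 ≠ m + 1 := by omega
      simp only [if_neg e1, if_neg e2]
      exact hstep p h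
    · have hpm : p = m := by omega
      subst hpm
      have e1 : p ≠ p + 1 := by omega
      simp only [if_neg e1, if_pos rfl, hfm]
      exact h2

private lemma acyclic_iff_irrefl (𝕀 : Finset (Finset ℕ)) (O : Edge 𝕀 → ℕ) :
    IsAcyclic 𝕀 O ↔
      ∀ a, ¬ Relation.TransGen (fun a b => ∃ H : Edge 𝕀, O H = a ∧ b ∈ H.1 ∧ b ≠ a) a a := by
  unfold IsAcyclic
  rw [← not_exists]
  apply not_congr
  constructor
  · rintro ⟨k, H, hk2, hH, hstep⟩
    refine ⟨O (H 0), ?_⟩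
    have key : ∀ p, 1 ≤ p → p ≤ k →
        Relation.TransGen (fun a b => ∃ H : Edge 𝕀, O H = a ∧ b ∈ H.1 ∧ b ≠ a)
          (O (H 0)) (O (H p)) := by
      intro p
      induction p with
      | zero => omega
      | succ q ih =>
        intro _ hq
        rcases Nat.eq_zero_or_pos q with rfl | hq0
        · exact Relation.TransGen.single
            ⟨H 0, rfl, (hstep 0 (by omega)).1, (hstep 0 (by omega)).2⟩
        · exact (ih hq0 (by omega)).tail
            ⟨H q, rfl, (hstep q (by omega)).1, (hstep q (by omega)).2⟩
    have hkey := key k (by omega) le_rfl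
    rwa [hH] at hkey
  · rintro ⟨a, ha⟩
    obtain ⟨m, hm1, f, hf0, hfm, hstep⟩ := exists_seq_of_transGen ha
    choose E hE1 hE2 hE3 using hstep
    have hm2 : 2 ≤ m := by
      by_contra h
      have hm : m = 1 := by omega
      exact hE3 0 (by omega) (by rw [show (0:ℕ)+1 = m by omega, hfm, hf0])
    set Etot : ℕ → Edge 𝕀 := fun p => if h : p < m then E p h else E 0 (by omega) with hEtot
    have hOall : ∀ p ≤ m, O (Etot (p % m)) = f p := by
      intro p hp
      rcases Nat.lt_or_ge p m with h | h
      · rw [Nat.mod_eq_of_lt h]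
        simp only [hEtot, dif_pos h]
        exact hE1 p h
      · have hpm : p = m := by omega
        rw [hpm, Nat.mod_self]
        have h0 : (0:ℕ) < m := by omega
        simp only [hEtot, dif_pos h0]
        rw [hE1 0 h0, hf0, hfm]
    refine ⟨m, fun p => Etot (p % m), hm2,
      by show Etot (m % m) = Etot (0 % m); rw [Nat.mod_self, Nat.zero_mod], ?_⟩
    intro p hp
    show O (Etot ((p + 1) % m)) ∈ (Etot (p % m)).1 ∧ O (Etot ((p + 1) % m)) ≠ O (Etot (p % m))
    have e1 : Etot (p % m) = E p hp := by
      rw [Nat.mod_eq_of_lt hp]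
      simp only [hEtot, dif_pos hp]
    have e2 : O (Etot ((p + 1) % m)) = f (p + 1) := hOall (p + 1) (by omega)
    rw [e1, e2]
    refine ⟨hE2 p hp, ?_⟩
    rw [hE1 p hp]
    exact hE3 p hp

private lemma mem_between {n : ℕ} {𝕀 : Finset (Finset ℕ)} (h𝕀 : IsIntervalHypergraph n 𝕀)
    (H : Edge 𝕀) {x y z : ℕ} (hx : x ∈ H.1) (hz : z ∈ H.1) (h1 : x ≤ y) (h2 : y ≤ z) :
    y ∈ H.1 := by
  obtain ⟨a, b, _, _, _, hH⟩ := h𝕀.1 H.1 H.2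
  rw [hH] at hx hz ⊢
  simp only [Finset.mem_Icc] at hx hz ⊢
  omega

/-- Criterion for an increasing flip to produce an acyclic
orientation: with `k = max {max I : I ∈ 𝕀, A(I) = i}`, the orientation `B` obtained
from `A` by flipping `i` to `j` is acyclic iff there is no `J ∈ 𝕀` with
`j ∈ J \ {A(J)}` and `A(J) ∈ (i, k]`. -/
theorem stmt9 (n : ℕ) (hn : 1 ≤ n) (𝕀 : Finset (Finset ℕ))
    (h𝕀 : IsIntervalHypergraph n 𝕀) (A : Edge 𝕀 → ℕ) (hA : AcycOr 𝕀 A)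
    (i j : ℕ) (hi : 1 ≤ i) (hij : i < j) (hj : j ≤ n)
    (hI : ∃ I : Edge 𝕀, A I = i ∧ j ∈ I.1)
    (k : ℕ) (hk : IsGreatest {m | ∃ H : Edge 𝕀, A H = i ∧ m ∈ H.1} k)
    (B : Edge 𝕀 → ℕ)
    (hB : ∀ H : Edge 𝕀, (A H = i ∧ j ∈ H.1 → B H = j) ∧
      (¬(A H = i ∧ j ∈ H.1) → B H = A H)) :
    IsAcyclic 𝕀 B ↔ ¬∃ J : Edge 𝕀, j ∈ J.1 ∧ j ≠ A J ∧ i < A J ∧ A J ≤ k := by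
  obtain ⟨hAor, hAac⟩ := hA
  obtain ⟨I0, hI0A, hI0j⟩ := hI
  set relA : ℕ → ℕ → Prop := fun a b => ∃ H : Edge 𝕀, A H = a ∧ b ∈ H.1 ∧ b ≠ a with hrelA
  set relB : ℕ → ℕ → Prop := fun a b => ∃ H : Edge 𝕀, B H = a ∧ b ∈ H.1 ∧ b ≠ a with hrelB
  have hAirr : ∀ a, ¬ Relation.TransGen relA a a := (acyclic_iff_irrefl 𝕀 A).mp hAac
  rw [acyclic_iff_irrefl 𝕀 B]
  have hjk : j ≤ k := hk.2 ⟨I0, hI0A, hI0j⟩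
  obtain ⟨Hs, hHsA, hHsk⟩ := hk.1
  have hHsi : i ∈ Hs.1 := hHsA ▸ hAor Hs
  have hHsj : j ∈ Hs.1 := mem_between h𝕀 Hs hHsi hHsk hij.le hjk
  constructor
  · -- B acyclic → no forbidden J
    intro hBac
    rintro ⟨J, hJj, hJne, hJgt, hJle⟩
    have hBHs : B Hs = j := (hB Hs).1 ⟨hHsA, hHsj⟩
    have hBJ : B J = A J := (hB J).2 (fun h => by omega)
    have hAJHs : A J ∈ Hs.1 := mem_between h𝕀 Hs hHsi hHsk hJgt.le hJle
    exact hBac j (Relation.TransGen.head ⟨Hs, hBHs, hAJHs, Ne.symm hJne⟩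
      (Relation.TransGen.single ⟨J, hBJ, hJj, hJne⟩))
  · -- no forbidden J → B acyclic
    intro hno a hcyc
    have hstepcase : ∀ x y, relB x y →
        (relA x y ∧ relB x y) ∨ (x = j ∧ ∃ H : Edge 𝕀, A H = i ∧ j ∈ H.1 ∧ y ∈ H.1 ∧ y ≠ j) := by
      rintro x y ⟨H, hBH, hyH, hyx⟩
      by_cases hf : A H = i ∧ j ∈ H.1
      · have hxj : x = j := by rw [← hBH, (hB H).1 hf]
        rw [hxj] at hyx
        exact Or.inr ⟨hxj, H, hf.1, hf.2, hyH, hyx⟩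
      · have hBA : B H = A H := (hB H).2 hf
        exact Or.inl ⟨⟨H, by rw [← hBA]; exact hBH, hyH, hyx⟩, ⟨H, hBH, hyH, hyx⟩⟩
    have hL : ∀ x y, Relation.TransGen relB x y →
        (Relation.TransGen relA x y ∧ Relation.TransGen relB x y) ∨
        (∃ b, (∃ H : Edge 𝕀, A H = i ∧ j ∈ H.1 ∧ b ∈ H.1 ∧ b ≠ j) ∧
          Relation.ReflTransGen relB b y ∧ Relation.ReflTransGen relB x j) := by
      intro x y h
      induction h with
      | @single c hs =>
        rcases hstepcase _ _ hs with ⟨h1, h2⟩ | ⟨hxj, hf⟩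
        · exact Or.inl ⟨Relation.TransGen.single h1, Relation.TransGen.single h2⟩
        · exact Or.inr ⟨c, hf, Relation.ReflTransGen.refl, hxj ▸ Relation.ReflTransGen.refl⟩
      | @tail z y' h1 hs ih =>
        rcases hstepcase _ _ hs with ⟨ha, hb⟩ | ⟨hzj, hf⟩
        · rcases ih with ⟨hA1, hB1⟩ | ⟨b, hfb, hb1, hb2⟩
          · exact Or.inl ⟨hA1.tail ha, hB1.tail hb⟩
          · exact Or.inr ⟨b, hfb, hb1.tail hb, hb2⟩
        · refine Or.inr ⟨y', hf, Relation.ReflTransGen.refl, ?_⟩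
          rcases ih with ⟨_, hB1⟩ | ⟨_, _, _, hb2⟩
          · exact hzj ▸ hB1.to_reflTransGen
          · exact hb2
    rcases hL a a hcyc with ⟨h1, _⟩ | ⟨b, hf, hba, haj⟩
    · exact hAirr a h1
    · obtain ⟨Hp, hHpA, hHpj, hbHp, hbj⟩ := hf
      have hbtg : Relation.TransGen relB b j := by
        rcases Relation.reflTransGen_iff_eq_or_transGen.mp (hba.trans haj) with h | h
        · exact absurd h.symm hbj
        · exact h
      set R : ℕ → ℕ → Prop :=
        fun x y => (∃ H : Edge 𝕀, B H = x ∧ A H = x ∧ y ∈ H.1 ∧ y ≠ x) ∧ x ≠ j with hRdef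
      have hBtoR : ∀ x y, x ≠ j → relB x y → R x y := by
        rintro x y hxj ⟨H, hBH, hyH, hyx⟩
        by_cases hfH : A H = i ∧ j ∈ H.1
        · exact absurd (by rw [← hBH, (hB H).1 hfH]) hxj
        · exact ⟨⟨H, hBH, by rw [← (hB H).2 hfH]; exact hBH, hyH, hyx⟩, hxj⟩
      have hRA : ∀ {x y}, R x y → relA x y := by
        rintro x y ⟨⟨H, _, h2, h3, h4⟩, _⟩
        exact ⟨H, h2, h3, h4⟩
      have hfirst : ∀ x, Relation.TransGen relB x j → x ≠ j → Relation.TransGen R x j := by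
        intro x h
        induction h using Relation.TransGen.head_induction_on with
        | single hs => exact fun hxj => Relation.TransGen.single (hBtoR _ _ hxj hs)
        | @head x' c hs ht ihh =>
          intro hxj
          by_cases hcj : c = j
          · exact Relation.TransGen.single (hBtoR _ _ hxj (hcj ▸ hs))
          · exact (ihh hcj).head (hBtoR _ _ hxj hs)
      obtain ⟨c, hbc, hcj⟩ := Relation.TransGen.tail'_iff.mp (hfirst b hbtg hbj)
      obtain ⟨⟨H', hBH', hAH', hjH', hjc⟩, hcj'⟩ := hcj
      have hci : c ≠ i := by
        intro h
        rw [h] at hAH' hBH'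
        have hj' : B H' = j := (hB H').1 ⟨hAH', hjH'⟩
        rw [hBH'] at hj'
        omega
      have hcH' : c ∈ H'.1 := hAH' ▸ hAor H'
      have hib : Relation.ReflTransGen relA i b := by
        by_cases hbi : b = i
        · rw [hbi]
        · exact Relation.ReflTransGen.single ⟨Hp, hHpA, hbHp, hbi⟩
      have hbk : b ≤ k := hk.2 ⟨Hp, hHpA, hbHp⟩
      rcases lt_trichotomy c i with hlt | heq | hgt
      · have hiH' : i ∈ H'.1 := mem_between h𝕀 H' hcH' hjH' hlt.le hij.le
        exact hAirr i (Relation.TransGen.tail'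
          (hib.trans (Relation.ReflTransGen.mono (fun x y h => hRA h : ∀ x y, R x y → relA x y) _ _ hbc)) ⟨H', hAH', hiH', by omega⟩)
      · exact hci heq
      · by_cases hck : c ≤ k
        · refine hno ⟨H', hjH', ?_, ?_, ?_⟩ <;> rw [hAH']
          · exact Ne.symm hcj'
          · exact hgt
          · exact hck
        · push_neg at hck
          have hcross : ∀ y, Relation.ReflTransGen R b y → k < y →
              ∃ d e, Relation.ReflTransGen R b d ∧ R d e ∧ d ≤ k ∧ k < e ∧
                Relation.ReflTransGen R e y := by
            intro y hy
            induction hy with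
            | refl => intro h; omega
            | @tail z y' h1 h2 ih =>
              intro hky
              rcases le_or_gt z k with hz | hz
              · exact ⟨z, y', h1, h2, hz, hky, Relation.ReflTransGen.refl⟩
              · obtain ⟨d, e, p1, p2, p3, p4, p5⟩ := ih hz
                exact ⟨d, e, p1, p2, p3, p4, p5.tail h2⟩
          obtain ⟨d, e, hbd, hde, hdk, hke, hec⟩ := hcross c hbc hck
          obtain ⟨⟨Hr, hBHr, hAHr, heHr, hed⟩, hdj⟩ := hde
          have hdHr : d ∈ Hr.1 := hAHr ▸ hAor Hr
          rcases lt_trichotomy d i with h1 | h1 | h1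
          · have hiHr : i ∈ Hr.1 := mem_between h𝕀 Hr hdHr heHr h1.le (by omega)
            exact hAirr i (Relation.TransGen.tail'
              (hib.trans (Relation.ReflTransGen.mono (fun x y h => hRA h : ∀ x y, R x y → relA x y) _ _ hbd)) ⟨Hr, hAHr, hiHr, by omega⟩)
          · have hjHr : j ∈ Hr.1 := mem_between h𝕀 Hr hdHr heHr (by omega) (by omega)
            have hj' : B Hr = j := (hB Hr).1 ⟨by rw [hAHr]; exact h1, hjHr⟩
            exact hdj (by rw [← hBHr, hj'])
          · rcases lt_trichotomy d j with h2 | h2 | h2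
            · have hjHr : j ∈ Hr.1 := mem_between h𝕀 Hr hdHr heHr h2.le (by omega)
              refine hno ⟨Hr, hjHr, ?_, ?_, ?_⟩ <;> rw [hAHr]
              · omega
              · exact h1
              · exact hdk
            · exact hdj h2
            · have hdH' : d ∈ H'.1 := mem_between h𝕀 H' hjH' hcH' h2.le (by omega)
              exact hAirr d (Relation.TransGen.tail'
                (Relation.ReflTransGen.head ⟨Hr, hAHr, heHr, hed⟩
                  (Relation.ReflTransGen.mono (fun x y h => hRA h : ∀ x y, R x y → relA x y) _ _ hec))
                ⟨H', hAH', hdH', by omega⟩)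
end IHL
end

section
/- Let 𝕀 be an interval hypergraph on [n] that is closed under intersection. Then for any two acyclic orientations A and B of 𝕀, the following are equivalent: (a) A ≤ B in the hypergraphic poset P_𝕀; (b) A(I) ≤ B(I) for all I ∈ 𝕀; (c) for all 1 ≤ i < j ≤ n, if j ≺_A i then ¬(i ≺_B j). -/
namespace IHL

section Aux

variable {n : ℕ} {𝕀 : Finset (Finset ℕ)}

/-- Points between two points of a hyperedge belong to the hyperedge. -/
lemma mem_between_s12 (h𝕀 : IsIntervalHypergraph n 𝕀) {H : Finset ℕ} (hH : H ∈ 𝕀)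
    {u v w : ℕ} (hu : u ∈ H) (hv : v ∈ H) (h1 : u ≤ w) (h2 : w ≤ v) : w ∈ H := by
  obtain ⟨a, b, -, -, -, rfl⟩ := h𝕀.1 H hH
  simp only [Finset.mem_Icc] at *
  omega

lemma mem_bounds (h𝕀 : IsIntervalHypergraph n 𝕀) {H : Finset ℕ} (hH : H ∈ 𝕀)
    {x : ℕ} (hx : x ∈ H) : 1 ≤ x ∧ x ≤ n := by
  obtain ⟨a, b, h1, h2, h3, rfl⟩ := h𝕀.1 H hH
  simp only [Finset.mem_Icc] at hx
  omega

lemma prec_single {O : Edge 𝕀 → ℕ} {H : Edge 𝕀} {a b : ℕ}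
    (h1 : O H = a) (h2 : b ∈ H.1) (h3 : b ≠ a) : prec 𝕀 O a b :=
  Relation.TransGen.single ⟨H, h1, h2, h3⟩

/-- From a `prec` relation, extract an explicit chain of hyperedges. -/
lemma exists_chain {O : Edge 𝕀 → ℕ} {u v : ℕ} (h : prec 𝕀 O u v) :
    ∃ (m : ℕ) (G : ℕ → Edge 𝕀), 1 ≤ m ∧ O (G 0) = u ∧
      (∀ p, p + 1 < m → O (G (p + 1)) ∈ (G p).1 ∧ O (G (p + 1)) ≠ O (G p)) ∧
      v ∈ (G (m - 1)).1 ∧ v ≠ O (G (m - 1)) := by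
  induction h with
  | single hs =>
    obtain ⟨E, hE1, hE2, hE3⟩ := hs
    exact ⟨1, fun _ => E, le_refl 1, hE1, fun p hp => absurd hp (by omega),
      hE2, by rw [hE1]; exact hE3⟩
  | @tail y v h1 hs ih =>
    obtain ⟨m, G, hm, hG0, hGc, hGl1, hGl2⟩ := ih
    obtain ⟨E, hE1, hE2, hE3⟩ := hs
    refine ⟨m + 1, fun p => if p < m then G p else E, by omega, ?_, ?_, ?_, ?_⟩
    · beta_reduce
      rw [if_pos (by omega : 0 < m)]
      exact hG0
    · intro p hp
      beta_reduce
      by_cases h2 : p + 1 < m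
      · rw [if_pos h2, if_pos (by omega : p < m)]
        exact hGc p h2
      · have hpe : p = m - 1 := by omega
        rw [if_neg h2, if_pos (by omega : p < m), hE1, hpe]
        exact ⟨hGl1, hGl2⟩
    · beta_reduce
      rw [show m + 1 - 1 = m by omega, if_neg (by omega : ¬ m < m)]
      exact hE2
    · beta_reduce
      rw [show m + 1 - 1 = m by omega, if_neg (by omega : ¬ m < m), hE1]
      exact hE3

/-- `≺_O` is irreflexive for an acyclic orientation. -/
lemma prec_irrefl {O : Edge 𝕀 → ℕ} (hO : IsAcyclic 𝕀 O) (z : ℕ) : ¬ prec 𝕀 O z z := by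
  intro h
  obtain ⟨m, G, hm, hG0, hGc, hGl1, hGl2⟩ := exists_chain h
  have hm2 : 2 ≤ m := by
    rcases Nat.lt_or_ge m 2 with h2 | h2
    · have hm1 : m = 1 := by omega
      subst hm1
      simp only [Nat.sub_self] at hGl2
      exact absurd hG0 (Ne.symm hGl2)
    · exact h2
  refine hO ⟨m, fun p => G (p % m), hm2, by beta_reduce; rw [Nat.mod_self, Nat.zero_mod], ?_⟩
  intro p hp
  beta_reduce
  rw [Nat.mod_eq_of_lt hp]
  by_cases h2 : p + 1 < m
  · rw [Nat.mod_eq_of_lt h2]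
    exact hGc p h2
  · rw [show p + 1 = m by omega, Nat.mod_self, hG0, show p = m - 1 by omega]
    exact ⟨hGl1, hGl2⟩

/-- A non-acyclic orientation has a `prec`-cycle. -/
lemma cycle_of_not_acyclic {O : Edge 𝕀 → ℕ} (hO : ¬ IsAcyclic 𝕀 O) :
    ∃ z, prec 𝕀 O z z := by
  obtain ⟨k, H, hk, hH0, hcyc⟩ := not_not.mp hO
  refine ⟨O (H 0), ?_⟩
  have key : ∀ p, 1 ≤ p → p ≤ k → prec 𝕀 O (O (H 0)) (O (H p)) := by
    intro p
    induction p with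
    | zero => omega
    | succ q ihq =>
      intro _ hq
      rcases Nat.eq_zero_or_pos q with rfl | hq0
      · exact Relation.TransGen.single ⟨H 0, rfl, (hcyc 0 (by omega)).1, (hcyc 0 (by omega)).2⟩
      · exact (ihq hq0 (by omega)).tail
          ⟨H q, rfl, (hcyc q (by omega)).1, (hcyc q (by omega)).2⟩
  have := key k (by omega) le_rfl
  rwa [hH0] at this

/-- Two-cycle lemma: if `K ⊆ H` and the source of `H` lies in `K`, the sources agree. -/
lemma orient_eq_of_subset {O : Edge 𝕀 → ℕ} (hO : AcycOr 𝕀 O) (K H : Edge 𝕀)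
    (hsub : K.1 ⊆ H.1) (hm : O H ∈ K.1) : O K = O H := by
  by_contra hne
  refine hO.2 ⟨2, fun p => if p % 2 = 0 then H else K, le_refl 2, by norm_num, ?_⟩
  intro p hp
  interval_cases p
  · simpa using ⟨hsub (hO.1 K), hne⟩
  · simpa using ⟨hm, fun h => hne h.symm⟩

/-- Localization: if `u ≺ v` then `u ≺ w` for every `w` strictly between `u` and `v`. -/
lemma prec_between (h𝕀 : IsIntervalHypergraph n 𝕀) {O : Edge 𝕀 → ℕ}
    (hO : IsOrientation 𝕀 O) {u v : ℕ} (h : prec 𝕀 O u v) :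
    ∀ w, (u < w ∧ w < v) ∨ (v < w ∧ w < u) → prec 𝕀 O u w := by
  induction h with
  | single hs =>
    intro w hw
    obtain ⟨E, hE1, hE2, hE3⟩ := hs
    have huE : u ∈ E.1 := hE1 ▸ hO E
    have hwE : w ∈ E.1 := by
      rcases hw with ⟨h4, h5⟩ | ⟨h4, h5⟩
      · exact mem_between_s12 h𝕀 E.2 huE hE2 h4.le h5.le
      · exact mem_between_s12 h𝕀 E.2 hE2 huE h4.le h5.le
    exact Relation.TransGen.single ⟨E, hE1, hwE, by omega⟩
  | @tail y v h1 hs ih =>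
    intro w hw
    obtain ⟨E, hE1, hE2, hE3⟩ := hs
    have hyE : y ∈ E.1 := hE1 ▸ hO E
    rcases hw with ⟨h4, h5⟩ | ⟨h4, h5⟩
    · rcases lt_trichotomy w y with hwy | rfl | hwy
      · exact ih w (Or.inl ⟨h4, hwy⟩)
      · exact h1
      · exact h1.tail ⟨E, hE1, mem_between_s12 h𝕀 E.2 hyE hE2 hwy.le h5.le, by omega⟩
    · rcases lt_trichotomy w y with hwy | rfl | hwy
      · exact h1.tail ⟨E, hE1, mem_between_s12 h𝕀 E.2 hE2 hyE h4.le hwy.le, by omega⟩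
      · exact h1
      · exact ih w (Or.inr ⟨hwy, h5⟩)

/-- Upward crossing: a chain from `s ≤ t` to `e > t` has a step jumping above `t`. -/
lemma cross_up {O : Edge 𝕀 → ℕ} {s e : ℕ} (h : prec 𝕀 O s e) :
    ∀ t, s ≤ t → t < e → ∃ (G : Edge 𝕀) (y y' : ℕ), O G = y ∧ y ≤ t ∧ y' ∈ G.1 ∧ t < y' ∧
      (s = y ∨ prec 𝕀 O s y) ∧ (y' = e ∨ prec 𝕀 O y' e) := by
  induction h using Relation.TransGen.head_induction_on with
  | single hs =>
    intro t hst hte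
    obtain ⟨E, hE1, hE2, hE3⟩ := hs
    exact ⟨E, _, e, hE1, hst, hE2, hte, Or.inl rfl, Or.inl rfl⟩
  | @head a c hs hrest ihc =>
    intro t hst hte
    obtain ⟨E, hE1, hE2, hE3⟩ := hs
    by_cases hc : t < c
    · exact ⟨E, a, c, hE1, hst, hE2, hc, Or.inl rfl, Or.inr hrest⟩
    · push_neg at hc
      obtain ⟨G, y, y', hg1, hg2, hg3, hg4, hg5, hg6⟩ := ihc t hc hte
      refine ⟨G, y, y', hg1, hg2, hg3, hg4, Or.inr ?_, hg6⟩
      rcases hg5 with rfl | hg5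
      · exact Relation.TransGen.single ⟨E, hE1, hE2, hE3⟩
      · exact Relation.TransGen.head ⟨E, hE1, hE2, hE3⟩ hg5

/-- Downward crossing: a chain from `s > t` to `e ≤ t` has a step jumping below `t`. -/
lemma cross_down {O : Edge 𝕀 → ℕ} {s e : ℕ} (h : prec 𝕀 O s e) :
    ∀ t, e ≤ t → t < s → ∃ (E : Edge 𝕀) (x x' : ℕ), O E = x ∧ t < x ∧ x' ∈ E.1 ∧ x' ≤ t ∧
      (s = x ∨ prec 𝕀 O s x) ∧ (x' = e ∨ prec 𝕀 O x' e) := by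
  induction h using Relation.TransGen.head_induction_on with
  | single hs =>
    intro t het hts
    obtain ⟨E, hE1, hE2, hE3⟩ := hs
    exact ⟨E, _, e, hE1, hts, hE2, het, Or.inl rfl, Or.inl rfl⟩
  | @head a c hs hrest ihc =>
    intro t het hts
    obtain ⟨E, hE1, hE2, hE3⟩ := hs
    by_cases hc : c ≤ t
    · exact ⟨E, a, c, hE1, hts, hE2, hc, Or.inl rfl, Or.inr hrest⟩
    · push_neg at hc
      obtain ⟨G, x, x', hg1, hg2, hg3, hg4, hg5, hg6⟩ := ihc t het hc
      refine ⟨G, x, x', hg1, hg2, hg3, hg4, Or.inr ?_, hg6⟩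
      rcases hg5 with rfl | hg5
      · exact Relation.TransGen.single ⟨E, hE1, hE2, hE3⟩
      · exact Relation.TransGen.head ⟨E, hE1, hE2, hE3⟩ hg5

end Aux
section Pattern

variable {n : ℕ} {𝕀 : Finset (Finset ℕ)}

/-- Key lemma for (b) ⇒ (c): if `A ≤ B` pointwise then there is no pair `i < j`
with `j ≺_A i` and `i ≺_B j`. -/
lemma pattern1_free (h𝕀 : IsIntervalHypergraph n 𝕀) (hcl : ClosedUnderIntersection 𝕀)
    {A B : Edge 𝕀 → ℕ} (hA : AcycOr 𝕀 A) (hB : AcycOr 𝕀 B) (hAB : ∀ H, A H ≤ B H) :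
    ∀ d i j, i < j → j - i ≤ d → prec 𝕀 A j i → prec 𝕀 B i j → False := by
  intro d
  induction d with
  | zero => intro i j hij hd _ _; omega
  | succ d IH =>
    intro i j hij hd hAji hBij
    -- upward crossing of the B-chain at threshold i
    obtain ⟨G, y, y', hG1, hG2, hG3, hG4, hG5, hG6⟩ := cross_up hBij i le_rfl hij
    -- y' ≥ j, else smaller pattern at (y', j)
    have hy'j : j ≤ y' := by
      by_contra hlt
      push_neg at hlt
      have h1 : prec 𝕀 B y' j := by
        rcases hG6 with rfl | h
        · exact absurd hlt (lt_irrefl _)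
        · exact h
      have h2 : prec 𝕀 A j y' := prec_between h𝕀 hA.1 hAji y' (Or.inr ⟨hG4, hlt⟩)
      exact IH y' j hlt (by omega) h2 h1
    -- downward crossing of the A-chain at threshold j - 1
    obtain ⟨E, x, x', hE1, hE2, hE3, hE4, hE5, hE6⟩ := cross_down hAji (j - 1) (by omega) (by omega)
    have hx : j ≤ x := by omega
    -- x' ≤ i, else smaller pattern at (i, x')
    have hx'i : x' ≤ i := by
      by_contra hlt
      push_neg at hlt
      have hx'j : x' < j := by omega
      have h1 : prec 𝕀 A x' i := by
        rcases hE6 with rfl | h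
        · exact absurd hlt (lt_irrefl _)
        · exact h
      have h2 : prec 𝕀 B i x' := prec_between h𝕀 hB.1 hBij x' (Or.inl ⟨hlt, hx'j⟩)
      exact IH i x' hlt (by omega) h1 h2
    -- the intersection N of the two crossing edges contains [i, j]
    have hxE : x ∈ E.1 := hE1 ▸ hA.1 E
    have hyG : y ∈ G.1 := hG1 ▸ hB.1 G
    have hiE : i ∈ E.1 := mem_between_s12 h𝕀 E.2 hE3 hxE hx'i (by omega)
    have hjE : j ∈ E.1 := mem_between_s12 h𝕀 E.2 hE3 hxE (by omega) hx
    have hiG : i ∈ G.1 := mem_between_s12 h𝕀 G.2 hyG hG3 hG2 (by omega)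
    have hjG : j ∈ G.1 := mem_between_s12 h𝕀 G.2 hyG hG3 (by omega) hy'j
    have hN𝕀 : E.1 ∩ G.1 ∈ 𝕀 :=
      hcl E.1 E.2 G.1 G.2 ⟨i, Finset.mem_inter.2 ⟨hiE, hiG⟩⟩
    set N : Edge 𝕀 := ⟨E.1 ∩ G.1, hN𝕀⟩ with hNdef
    have hiN : i ∈ N.1 := Finset.mem_inter.2 ⟨hiE, hiG⟩
    have hjN : j ∈ N.1 := Finset.mem_inter.2 ⟨hjE, hjG⟩
    set a₀ := A N with ha₀
    set b₀ := B N with hb₀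
    have hab : a₀ ≤ b₀ := hAB N
    have ha₀N : a₀ ∈ N.1 := hA.1 N
    have hb₀N : b₀ ∈ N.1 := hB.1 N
    have ha₀E : a₀ ∈ E.1 := (Finset.mem_inter.1 ha₀N).1
    have hb₀G : b₀ ∈ G.1 := (Finset.mem_inter.1 hb₀N).2
    rcases lt_trichotomy a₀ i with hai | hai | hai
    · -- a₀ < i : A-cycle through x, a₀, j
      have h1 : prec 𝕀 A x a₀ := prec_single hE1 ha₀E (by omega)
      have h2 : prec 𝕀 A a₀ j := prec_single ha₀.symm hjN (by omega)
      have h3 : prec 𝕀 A x x := by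
        rcases hE5 with rfl | h5
        · exact h1.trans h2
        · exact (h1.trans h2).trans h5
      exact prec_irrefl hA.2 x h3
    · -- a₀ = i : A-cycle through i and j
      have h1 : prec 𝕀 A i j := prec_single (hai ▸ ha₀.symm) hjN (by omega)
      exact prec_irrefl hA.2 i (h1.trans hAji)
    · rcases lt_trichotomy a₀ j with haj | haj | haj
      · -- i < a₀ < j : smaller pattern at (i, a₀)
        have h1 : prec 𝕀 A a₀ i := prec_single ha₀.symm hiN (by omega)
        have h2 : prec 𝕀 B i a₀ := prec_between h𝕀 hB.1 hBij a₀ (Or.inl ⟨hai, haj⟩)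
        exact IH i a₀ hai (by omega) h1 h2
      · -- a₀ = j : use b₀ ≥ j
        rcases eq_or_lt_of_le (haj ▸ hab) with hbj | hbj
        · -- b₀ = j : B-cycle
          have h1 : prec 𝕀 B j i := prec_single (hbj ▸ hb₀.symm) hiN (by omega)
          exact prec_irrefl hB.2 i (hBij.trans h1)
        · -- b₀ > j : B-cycle through y, b₀, i
          have h1 : prec 𝕀 B y b₀ := prec_single hG1 hb₀G (by omega)
          have h2 : prec 𝕀 B b₀ i := prec_single hb₀.symm hiN (by omega)
          have h3 : prec 𝕀 B i i := by
            rcases hG5 with rfl | h5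
            · exact h1.trans h2
            · exact (h5.trans h1).trans h2
          exact prec_irrefl hB.2 i h3
      · -- a₀ > j : A-cycle
        have h2 : prec 𝕀 A a₀ j := prec_single ha₀.symm hjN (by omega)
        rcases eq_or_ne a₀ x with rfl | hax
        · have h3 : prec 𝕀 A a₀ a₀ := by
            rcases hE5 with rfl | h5
            · exact h2
            · exact h2.trans h5
          exact prec_irrefl hA.2 a₀ h3
        · have h1 : prec 𝕀 A x a₀ := prec_single hE1 ha₀E hax
          have h3 : prec 𝕀 A x x := by
            rcases hE5 with rfl | h5
            · exact h1.trans h2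
            · exact (h1.trans h2).trans h5
          exact prec_irrefl hA.2 x h3

end Pattern
section Flip

variable {n : ℕ} {𝕀 : Finset (Finset ℕ)}

/-- Increasing-flip existence: if `A ≤ B` pointwise and `A ≠ B`, there is an increasing
flip from `A` to some acyclic `C` with `A ≤ C ≤ B` pointwise and `A ≠ C`. -/
lemma exists_flip (h𝕀 : IsIntervalHypergraph n 𝕀) (hcl : ClosedUnderIntersection 𝕀)
    {A B : Edge 𝕀 → ℕ} (hA : AcycOr 𝕀 A) (hB : AcycOr 𝕀 B) (hAB : ∀ H, A H ≤ B H)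
    (hne : A ≠ B) :
    ∃ C : Edge 𝕀 → ℕ, AcycOr 𝕀 C ∧ FlipStep n 𝕀 A C ∧ (∀ H, A H ≤ C H) ∧
      (∀ H, C H ≤ B H) ∧ ∃ H₀ : Edge 𝕀, A H₀ < C H₀ := by
  classical
  obtain ⟨Hd, hHd⟩ := Function.ne_iff.mp hne
  have hdne : (Finset.univ.filter (fun H : Edge 𝕀 => A H ≠ B H)).Nonempty :=
    ⟨Hd, by simp [hHd]⟩
  obtain ⟨W, hWmem, hWmax⟩ :=
    Finset.exists_max_image (Finset.univ.filter (fun H : Edge 𝕀 => A H ≠ B H))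
      (fun H : Edge 𝕀 => A H * (n + 1) + B H) hdne
  have hWne : A W ≠ B W := (Finset.mem_filter.1 hWmem).2
  set i0 := A W with hi0def
  set j0 := B W with hj0def
  have hij : i0 < j0 := lt_of_le_of_ne (hAB W) hWne
  have hi0W : i0 ∈ W.1 := hA.1 W
  have hj0W : j0 ∈ W.1 := hB.1 W
  have hBn : ∀ H : Edge 𝕀, B H ≤ n := fun H => (mem_bounds h𝕀 H.2 (hB.1 H)).2
  have lex : ∀ K : Edge 𝕀, A K ≠ B K → A K * (n + 1) + B K ≤ i0 * (n + 1) + j0 :=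
    fun K hK => hWmax K (Finset.mem_filter.2 ⟨Finset.mem_univ _, hK⟩)
  have lex1 : ∀ K : Edge 𝕀, A K ≠ B K → A K ≤ i0 := by
    intro K hK
    by_contra hgt
    push_neg at hgt
    have h1 : (i0 + 1) * (n + 1) ≤ A K * (n + 1) := Nat.mul_le_mul_right _ hgt
    have h2 := lex K hK
    have h3 : j0 ≤ n := hBn W
    nlinarith
  have lex2 : ∀ K : Edge 𝕀, A K ≠ B K → A K = i0 → B K ≤ j0 := by
    intro K hK hAK
    have h2 := lex K hK
    rw [hAK] at h2
    exact Nat.le_of_add_le_add_left h2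
  have interW : ∀ w, i0 ≤ w → w ≤ j0 → w ∈ W.1 :=
    fun w h1 h2 => mem_between_s12 h𝕀 W.2 hi0W hj0W h1 h2
  -- all flipped hyperedges have `B`-source exactly `j0`
  have F1 : ∀ H : Edge 𝕀, i0 ∈ H.1 → j0 ∈ H.1 → A H = i0 → B H = j0 := by
    intro H hi hj hAH
    have hKne : (H.1 ∩ W.1).Nonempty := ⟨i0, Finset.mem_inter.2 ⟨hi, hi0W⟩⟩
    have hK𝕀 : H.1 ∩ W.1 ∈ 𝕀 := hcl _ H.2 _ W.2 hKne
    set K : Edge 𝕀 := ⟨H.1 ∩ W.1, hK𝕀⟩ with hKdef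
    have hAK : A K = i0 := by
      have h := orient_eq_of_subset hA K H Finset.inter_subset_left
        (by rw [hAH]; exact Finset.mem_inter.2 ⟨hi, hi0W⟩)
      rw [h, hAH]
    have hBK : B K = j0 :=
      orient_eq_of_subset hB K W Finset.inter_subset_right
        (Finset.mem_inter.2 ⟨hj, hj0W⟩)
    have h1 : i0 ≤ B H := hAH ▸ hAB H
    rcases lt_or_ge (B H) j0 with hlt | hge
    · have hBHK : B H ∈ K.1 := Finset.mem_inter.2 ⟨hB.1 H, interW _ h1 hlt.le⟩
      have h := orient_eq_of_subset hB K H Finset.inter_subset_left hBHK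
      omega
    · rcases eq_or_lt_of_le hge with heq | hlt2
      · exact heq.symm
      · have hdiff : A H ≠ B H := by omega
        have := lex2 H hdiff hAH
        omega
  -- no hyperedge containing `i0` and `j0` has `A`-source `j0`
  have noj : ∀ E : Edge 𝕀, i0 ∈ E.1 → j0 ∈ E.1 → A E ≠ j0 := by
    intro E hi hj hAE
    have hKne : (E.1 ∩ W.1).Nonempty := ⟨i0, Finset.mem_inter.2 ⟨hi, hi0W⟩⟩
    have hK𝕀 : E.1 ∩ W.1 ∈ 𝕀 := hcl _ E.2 _ W.2 hKne
    set K : Edge 𝕀 := ⟨E.1 ∩ W.1, hK𝕀⟩ with hKdef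
    have h1 : A K = j0 := by
      have h := orient_eq_of_subset hA K E Finset.inter_subset_left
        (by rw [hAE]; exact Finset.mem_inter.2 ⟨hj, hj0W⟩)
      rw [h, hAE]
    have h2 : A K = i0 :=
      orient_eq_of_subset hA K W Finset.inter_subset_right
        (Finset.mem_inter.2 ⟨hi, hi0W⟩)
    omega
  -- the flipped orientation
  set C : Edge 𝕀 → ℕ :=
    fun H => if i0 ∈ H.1 ∧ j0 ∈ H.1 ∧ A H = i0 then j0 else A H with hCdef
  have hC : ∀ H : Edge 𝕀,
      ((i0 ∈ H.1 ∧ j0 ∈ H.1 ∧ A H = i0) → C H = j0) ∧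
      (¬(i0 ∈ H.1 ∧ j0 ∈ H.1 ∧ A H = i0) → C H = A H) := by
    intro H
    constructor
    · intro h
      rw [hCdef]
      exact if_pos h
    · intro h
      rw [hCdef]
      exact if_neg h
  have hCor : IsOrientation 𝕀 C := by
    intro H
    by_cases h : i0 ∈ H.1 ∧ j0 ∈ H.1 ∧ A H = i0
    · rw [(hC H).1 h]; exact h.2.1
    · rw [(hC H).2 h]; exact hA.1 H
  have hAC : ∀ H, A H ≤ C H := by
    intro H
    by_cases h : i0 ∈ H.1 ∧ j0 ∈ H.1 ∧ A H = i0
    · rw [(hC H).1 h, h.2.2]; exact hij.le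
    · rw [(hC H).2 h]
  have hCB : ∀ H, C H ≤ B H := by
    intro H
    by_cases h : i0 ∈ H.1 ∧ j0 ∈ H.1 ∧ A H = i0
    · rw [(hC H).1 h, F1 H h.1 h.2.1 h.2.2]
    · rw [(hC H).2 h]; exact hAB H
  have hCW : C W = j0 := (hC W).1 ⟨hi0W, hj0W, rfl⟩
  -- every `C`-step whose source is not `j0` is an `A`-step along an unflipped hyperedge
  have hstepA : ∀ (v : ℕ) (E : Edge 𝕀), C E = v → v ≠ j0 →
      A E = v ∧ ¬(i0 ∈ E.1 ∧ j0 ∈ E.1 ∧ A E = i0) := by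
    intro v E hCE hvj
    by_cases h : i0 ∈ E.1 ∧ j0 ∈ E.1 ∧ A E = i0
    · rw [(hC E).1 h] at hCE
      exact absurd hCE.symm hvj
    · rw [(hC E).2 h] at hCE
      exact ⟨hCE, h⟩
  -- once a C-chain drops strictly below i0 (while A-above i0), it cannot reach j0
  have stuck : ∀ v, prec 𝕀 C v j0 → (v = i0 ∨ prec 𝕀 A i0 v) → v < i0 → False := by
    intro v hch
    induction hch using Relation.TransGen.head_induction_on with
    | @single a hs =>
      intro hiv hvi
      obtain ⟨E, hE1, hE2, hE3⟩ := hs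
      obtain ⟨hAE, hnF⟩ := hstepA a E hE1 (by omega)
      have haE : a ∈ E.1 := hAE ▸ hA.1 E
      have hi0E : i0 ∈ E.1 := mem_between_s12 h𝕀 E.2 haE hE2 hvi.le hij.le
      have h1 : prec 𝕀 A a i0 := prec_single hAE hi0E (by omega)
      rcases hiv with rfl | h
      · exact absurd hvi (lt_irrefl _)
      · exact prec_irrefl hA.2 i0 (h.trans h1)
    | @head a c hs hrest IH =>
      intro hiv hvi
      obtain ⟨E, hE1, hE2, hE3⟩ := hs
      obtain ⟨hAE, hnF⟩ := hstepA a E hE1 (by omega)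
      have hiAc : prec 𝕀 A i0 c := by
        have hac : prec 𝕀 A a c := prec_single hAE hE2 hE3
        rcases hiv with rfl | h
        · exact absurd hvi (lt_irrefl _)
        · exact h.trans hac
      by_cases hc : c < i0
      · exact IH (Or.inr hiAc) hc
      · push_neg at hc
        have haE : a ∈ E.1 := hAE ▸ hA.1 E
        have hi0E : i0 ∈ E.1 := mem_between_s12 h𝕀 E.2 haE hE2 hvi.le hc
        have h1 : prec 𝕀 A a i0 := prec_single hAE hi0E (by omega)
        rcases hiv with rfl | h
        · exact absurd hvi (lt_irrefl _)
        · exact prec_irrefl hA.2 i0 (h.trans h1)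
  -- main invariant: a C-chain from v (≥ i0, A-above i0, B-below j0) cannot reach j0
  have chain : ∀ v, prec 𝕀 C v j0 → (v = i0 ∨ prec 𝕀 A i0 v) → i0 ≤ v →
      prec 𝕀 B j0 v → v ≠ j0 → False := by
    intro v hch
    induction hch using Relation.TransGen.head_induction_on with
    | @single a hs =>
      intro hiv hia hBja haj
      obtain ⟨E, hE1, hE2, hE3⟩ := hs
      obtain ⟨hAE, hnF⟩ := hstepA a E hE1 haj
      by_cases hd : A E = B E
      · have hBE : B E = a := by rw [← hd, hAE]
        have h1 : prec 𝕀 B a j0 := prec_single hBE hE2 hE3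
        exact prec_irrefl hB.2 j0 (hBja.trans h1)
      · have h2 := lex1 E hd
        have h3 : A E = i0 := by omega
        exact hnF ⟨h3 ▸ hA.1 E, hE2, h3⟩
    | @head a c hs hrest IH =>
      intro hiv hia hBja haj
      obtain ⟨E, hE1, hE2, hE3⟩ := hs
      obtain ⟨hAE, hnF⟩ := hstepA a E hE1 haj
      have hiAc : prec 𝕀 A i0 c := by
        have hac : prec 𝕀 A a c := prec_single hAE hE2 hE3
        rcases hiv with rfl | h
        · exact hac
        · exact h.trans hac
      by_cases hc : c < i0
      · exact stuck c hrest (Or.inr hiAc) hc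
      · push_neg at hc
        by_cases hd : A E = B E
        · have hBE : B E = a := by rw [← hd, hAE]
          have h1 : prec 𝕀 B a c := prec_single hBE hE2 hE3
          have h2 : prec 𝕀 B j0 c := hBja.trans h1
          have h3 : c ≠ j0 := by
            rintro rfl
            exact prec_irrefl hB.2 j0 h2
          exact IH (Or.inr hiAc) hc h2 h3
        · have h2 := lex1 E hd
          have hAEi : A E = i0 := by omega
          have hi0E : i0 ∈ E.1 := hAEi ▸ hA.1 E
          have hj0E : j0 ∉ E.1 := fun hj => hnF ⟨hi0E, hj, hAEi⟩
          have hcj : c ≠ j0 := fun h => hj0E (h ▸ hE2)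
          have hule : B E ≤ j0 := lex2 E hd hAEi
          have huge : i0 ≤ B E := by rw [← hAEi]; exact hAB E
          have hune : B E ≠ i0 := by rw [← hAEi]; exact fun h => hd h.symm
          have hunej : B E ≠ j0 := fun h => hj0E (h ▸ hB.1 E)
          have huW : B E ∈ W.1 := interW _ huge hule
          have hju : prec 𝕀 B j0 (B E) := prec_single hj0def.symm huW hunej
          have h2 : prec 𝕀 B j0 c := by
            rcases eq_or_ne c (B E) with rfl | hcu
            · exact hju
            · exact hju.trans (prec_single rfl hE2 hcu)
          exact IH (Or.inr hiAc) hc h2 hcj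
  -- decomposition of any C-chain: either it is an A-chain, or it passes through a flipped edge
  have split3 : ∀ u v, prec 𝕀 C u v → prec 𝕀 A u v ∨
      ∃ (H : Edge 𝕀) (h : ℕ), (i0 ∈ H.1 ∧ j0 ∈ H.1 ∧ A H = i0) ∧ h ∈ H.1 ∧ h ≠ j0 ∧
        Relation.ReflTransGen (fun a b => ∃ H : Edge 𝕀, C H = a ∧ b ∈ H.1 ∧ b ≠ a) h v ∧
        Relation.ReflTransGen (fun a b => ∃ H : Edge 𝕀, C H = a ∧ b ∈ H.1 ∧ b ≠ a) u j0 := by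
    intro u v hch
    induction hch using Relation.TransGen.head_induction_on with
    | @single a hs =>
      obtain ⟨E, hE1, hE2, hE3⟩ := hs
      by_cases h : i0 ∈ E.1 ∧ j0 ∈ E.1 ∧ A E = i0
      · right
        have haj : a = j0 := by rw [← hE1, (hC E).1 h]
        exact ⟨E, v, h, hE2, by rw [← haj]; exact hE3, Relation.ReflTransGen.refl,
          haj ▸ Relation.ReflTransGen.refl⟩
      · left
        have hAE : A E = a := by rw [← (hC E).2 h]; exact hE1
        exact Relation.TransGen.single ⟨E, hAE, hE2, hE3⟩
    | @head a c hs hrest IH =>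
      obtain ⟨E, hE1, hE2, hE3⟩ := hs
      by_cases h : i0 ∈ E.1 ∧ j0 ∈ E.1 ∧ A E = i0
      · right
        have haj : a = j0 := by rw [← hE1, (hC E).1 h]
        exact ⟨E, c, h, hE2, by rw [← haj]; exact hE3, hrest.to_reflTransGen,
          haj ▸ Relation.ReflTransGen.refl⟩
      · have hAE : A E = a := by rw [← (hC E).2 h]; exact hE1
        rcases IH with hL | ⟨H, hh, hF, hh1, hh2, hh3, hh4⟩
        · left
          exact Relation.TransGen.head ⟨E, hAE, hE2, hE3⟩ hL
        · right
          exact ⟨H, hh, hF, hh1, hh2, hh3,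
            Relation.ReflTransGen.head ⟨E, hE1, hE2, hE3⟩ hh4⟩
  -- C is acyclic
  have hCacyc : IsAcyclic 𝕀 C := by
    by_contra hnot
    obtain ⟨z, hz⟩ := cycle_of_not_acyclic hnot
    rcases split3 z z hz with hL | ⟨H, h, hF, hh1, hh2, hh3, hh4⟩
    · exact prec_irrefl hA.2 z hL
    · have hrt : Relation.ReflTransGen
          (fun a b => ∃ H : Edge 𝕀, C H = a ∧ b ∈ H.1 ∧ b ≠ a) h j0 := hh3.trans hh4
      have htg : prec 𝕀 C h j0 := by
        rcases Relation.ReflTransGen.cases_tail hrt with heq | ⟨c, hc1, hc2⟩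
        · exact absurd heq.symm hh2
        · exact Relation.TransGen.tail' hc1 hc2
      have hiA : h = i0 ∨ prec 𝕀 A i0 h := by
        rcases eq_or_ne h i0 with rfl | hne'
        · exact Or.inl rfl
        · exact Or.inr (prec_single hF.2.2 hh1 hne')
      have hBj : prec 𝕀 B j0 h := prec_single (F1 H hF.1 hF.2.1 hF.2.2) hh1 hh2
      rcases lt_or_ge h i0 with hlt | hge
      · exact stuck h htg hiA hlt
      · exact chain h htg hiA hge hBj hh2
  -- assemble
  have hAneC : A ≠ C := by
    intro h
    have h2 := congrFun h W
    rw [hCW, ← hi0def] at h2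
    omega
  refine ⟨C, ⟨hCor, hCacyc⟩, ⟨hA, ⟨hCor, hCacyc⟩, i0, j0, hAneC,
    (mem_bounds h𝕀 W.2 hi0W).1, hij, (mem_bounds h𝕀 W.2 hj0W).2, ?_⟩, hAC, hCB,
    W, ?_⟩
  · intro H
    constructor
    · intro hne'
      by_cases h : i0 ∈ H.1 ∧ j0 ∈ H.1 ∧ A H = i0
      · exact ⟨h.2.2, (hC H).1 h⟩
      · exact absurd ((hC H).2 h).symm hne'
    · intro hi hj
      constructor
      · intro hAH
        exact (hC H).1 ⟨hi, hj, hAH⟩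
      · intro hCH
        by_cases h : i0 ∈ H.1 ∧ j0 ∈ H.1 ∧ A H = i0
        · exact h.2.2
        · rw [(hC H).2 h] at hCH
          exact absurd hCH (noj H hi hj)
  · rw [hCW, ← hi0def]
    exact hij

/-- (a) ⇒ (b): increasing flips increase all values. -/
lemma le_of_leP {A B : Edge 𝕀 → ℕ} (h : leP n 𝕀 A B) : ∀ H, A H ≤ B H := by
  induction h with
  | refl => exact fun H => le_rfl
  | @tail Bm Bf hchain hstep ih =>
    intro H
    refine (ih H).trans ?_
    obtain ⟨-, -, i, j, -, -, hij, -, hcond⟩ := hstep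
    by_cases he : Bm H = Bf H
    · exact he.le
    · obtain ⟨ha, hb⟩ := (hcond H).1 he
      omega

/-- (b) ⇒ (a). -/
lemma leP_of_le (h𝕀 : IsIntervalHypergraph n 𝕀) (hcl : ClosedUnderIntersection 𝕀)
    {B : Edge 𝕀 → ℕ} (hB : AcycOr 𝕀 B) :
    ∀ (m : ℕ) (A : Edge 𝕀 → ℕ), AcycOr 𝕀 A → (∀ H, A H ≤ B H) →
      (∑ H : Edge 𝕀, (B H - A H)) = m → leP n 𝕀 A B := by
  intro m
  induction m using Nat.strong_induction_on with
  | _ m IH =>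
    intro A hA hAB hsum
    by_cases he : A = B
    · exact he ▸ Relation.ReflTransGen.refl
    · obtain ⟨C, hCac, hflip, hAC, hCB, H₀, hH₀⟩ := exists_flip h𝕀 hcl hA hB hAB he
      have hlt : (∑ H : Edge 𝕀, (B H - C H)) < m := by
        rw [← hsum]
        apply Finset.sum_lt_sum
        · intro i _
          exact Nat.sub_le_sub_left (hAC i) _
        · refine ⟨H₀, Finset.mem_univ _, ?_⟩
          have h1 := hCB H₀
          have h2 := hAB H₀
          omega
      exact Relation.ReflTransGen.head hflip (IH _ hlt C hCac hCB rfl)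

end Flip

/-- For an interval hypergraph `𝕀` closed under intersection and
acyclic orientations `A, B`, the following are equivalent: (a) `A ≤ B` in `P_𝕀`;
(b) `A(I) ≤ B(I)` for all `I ∈ 𝕀`; (c) for all `1 ≤ i < j ≤ n`, `j ≺_A i` implies
`¬ (i ≺_B j)`. -/
theorem stmt12 (n : ℕ) (hn : 1 ≤ n) (𝕀 : Finset (Finset ℕ))
    (h𝕀 : IsIntervalHypergraph n 𝕀) (hcl : ClosedUnderIntersection 𝕀)
    (A B : Edge 𝕀 → ℕ) (hA : AcycOr 𝕀 A) (hB : AcycOr 𝕀 B) :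
    (leP n 𝕀 A B ↔ ∀ H : Edge 𝕀, A H ≤ B H) ∧
    (leP n 𝕀 A B ↔
      ∀ i j, 1 ≤ i → i < j → j ≤ n → prec 𝕀 A j i → ¬prec 𝕀 B i j) := by
  have hba : (∀ H : Edge 𝕀, A H ≤ B H) → leP n 𝕀 A B :=
    fun hle => leP_of_le h𝕀 hcl hB _ A hA hle rfl
  constructor
  · exact ⟨le_of_leP, hba⟩
  · constructor
    · intro hle i j _ hij _ hAji hBij
      exact pattern1_free h𝕀 hcl hA hB (le_of_leP hle) (j - i) i j hij le_rfl hAji hBij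
    · intro hc
      apply hba
      intro H
      by_contra hgt
      push_neg at hgt
      have h1 : 1 ≤ B H := (mem_bounds h𝕀 H.2 (hB.1 H)).1
      have h2 : A H ≤ n := (mem_bounds h𝕀 H.2 (hA.1 H)).2
      exact hc (B H) (A H) h1 hgt h2
        (prec_single rfl (hB.1 H) (by omega))
        (prec_single rfl (hA.1 H) (by omega))
end IHL
end

section
/- Let 𝕀 be an interval hypergraph on [n] that is closed under intersection. Then for all i, j ∈ 𝒥_𝕀, A_i ≤ A_j in the hypergraphic poset P_𝕀 if and only if J_i = J_j and i ≤ j. -/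
namespace IHL

section Aux

variable {n : ℕ} {𝕀 : Finset (Finset ℕ)}

lemma icc_least {a b : ℕ} (h : a ≤ b) : IsLeast (↑(Finset.Icc a b) : Set ℕ) a :=
  ⟨by simp [h], fun x hx => by simp only [Finset.coe_Icc, Set.mem_Icc] at hx; exact hx.1⟩

lemma icc_greatest {a b : ℕ} (h : a ≤ b) : IsGreatest (↑(Finset.Icc a b) : Set ℕ) b :=
  ⟨by simp [h], fun x hx => by simp only [Finset.coe_Icc, Set.mem_Icc] at hx; exact hx.2⟩

lemma leP_pointwise {A B : Edge 𝕀 → ℕ} (h : leP n 𝕀 A B) (H : Edge 𝕀) : A H ≤ B H := by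
  induction h with
  | refl => exact le_refl _
  | @tail B' C hAB step ih =>
    obtain ⟨_, _, i, j, _, _, hij, _, hflip⟩ := step
    refine le_trans ih ?_
    rcases eq_or_ne (B' H) (C H) with he | he
    · exact le_of_eq he
    · obtain ⟨e1, e2⟩ := (hflip H).1 he
      omega

lemma self_mem_J {j : ℕ} {Jj : Finset ℕ} (hJ : IsJj 𝕀 j Jj) : j ∈ Jj :=
  (hJ j).2 fun I _ hj _ => hj

lemma J_subset {j : ℕ} {Jj : Finset ℕ} (hJ : IsJj 𝕀 j Jj) {I : Finset ℕ} (hI : I ∈ 𝕀)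
    (hj : j ∈ I) (hy : ∃ y ∈ I, y < j) : Jj ⊆ I :=
  fun x hx => (hJ x).1 hx I hI hj hy

lemma mem_bounds_s14 (h𝕀 : IsIntervalHypergraph n 𝕀) {j : ℕ} (hjJ : InJI 𝕀 j) :
    1 ≤ j ∧ j ≤ n := by
  obtain ⟨I, hI, hjI, _⟩ := hjJ
  obtain ⟨a, b, ha, hab, hbn, rfl⟩ := h𝕀.1 I hI
  simp only [Finset.mem_Icc] at hjI; omega

lemma mu_ge_one (h𝕀 : IsIntervalHypergraph n 𝕀) {j μ : ℕ} {Jj : Finset ℕ}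
    (hjJ : InJI 𝕀 j) (hJ : IsJj 𝕀 j Jj) (hμ : IsLeast (Jj : Set ℕ) μ) : 1 ≤ μ := by
  obtain ⟨I, hI, hjI, hy⟩ := hjJ
  obtain ⟨a, b, ha, hab, hbn, rfl⟩ := h𝕀.1 I hI
  have := J_subset hJ hI hjI hy (Finset.mem_coe.mp hμ.1)
  simp only [Finset.mem_Icc] at this; omega

lemma mu_lt (h𝕀 : IsIntervalHypergraph n 𝕀) {j μ : ℕ} {Jj : Finset ℕ}
    (hjJ : InJI 𝕀 j) (hJ : IsJj 𝕀 j Jj) (hμ : IsLeast (Jj : Set ℕ) μ) : μ < j := by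
  classical
  obtain ⟨I0, hI0, hjI0, hy0⟩ := hjJ
  set S : Finset (Finset ℕ) := 𝕀.filter (fun I => j ∈ I ∧ ∃ y ∈ I, y < j) with hS
  have hSne : S.Nonempty := ⟨I0, by simp [hS, hI0, hjI0]; exact hy0⟩
  obtain ⟨Im, hImS, hmax⟩ := S.exists_max_image (fun I => sInf (I : Set ℕ)) hSne
  have hmemS : ∀ I ∈ S, I ∈ 𝕀 ∧ j ∈ I ∧ ∃ y ∈ I, y < j := by
    intro I hI; simpa [hS] using Finset.mem_filter.mp hI
  obtain ⟨hIm𝕀, hjIm, yIm, hyImm, hyImlt⟩ := hmemS Im hImS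
  obtain ⟨am, bm, _, habm, _, hImeq⟩ := h𝕀.1 Im hIm𝕀
  have hinfm : sInf ((Im : Finset ℕ) : Set ℕ) = am := by
    rw [hImeq]; exact (icc_least habm).csInf_eq
  have hamlt : am < j := by
    rw [hImeq] at hyImm; simp only [Finset.mem_Icc] at hyImm; omega
  have hamJ : am ∈ Jj := by
    refine (hJ am).2 ?_
    intro I hI hjI hyI
    have hIS : I ∈ S := Finset.mem_filter.mpr ⟨hI, hjI, hyI⟩
    obtain ⟨a, b, _, hab, _, hIeq⟩ := h𝕀.1 I hI
    have hinf : sInf ((I : Finset ℕ) : Set ℕ) = a := by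
      rw [hIeq]; exact (icc_least hab).csInf_eq
    have hle : a ≤ am := by have := hmax I hIS; rw [hinf, hinfm] at this; exact this
    have hjb : j ≤ b := by rw [hIeq] at hjI; exact (Finset.mem_Icc.mp hjI).2
    rw [hIeq]; exact Finset.mem_Icc.mpr ⟨hle, by omega⟩
  have := hμ.2 (Finset.mem_coe.mpr hamJ)
  omega

lemma J_mem_of_closed (h𝕀 : IsIntervalHypergraph n 𝕀) (hcl : ClosedUnderIntersection 𝕀)
    {j : ℕ} {Jj : Finset ℕ} (hjJ : InJI 𝕀 j) (hJ : IsJj 𝕀 j Jj) : Jj ∈ 𝕀 := by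
  classical
  obtain ⟨I0, hI0, hjI0, hy0⟩ := hjJ
  set S : Finset (Finset ℕ) := 𝕀.filter (fun I => j ∈ I ∧ ∃ y ∈ I, y < j) with hS
  have hSne : S.Nonempty := ⟨I0, by simp [hS, hI0, hjI0]; exact hy0⟩
  have hmemS : ∀ I ∈ S, I ∈ 𝕀 ∧ j ∈ I ∧ ∃ y ∈ I, y < j := by
    intro I hI; simpa [hS] using Finset.mem_filter.mp hI
  obtain ⟨Im, hImS, hmax⟩ := S.exists_max_image (fun I => sInf (I : Set ℕ)) hSne
  obtain ⟨In', hInS, hmin⟩ := S.exists_min_image (fun I => sSup (I : Set ℕ)) hSne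
  obtain ⟨hIm𝕀, hjIm, _⟩ := hmemS Im hImS
  obtain ⟨hIn𝕀, hjIn, _⟩ := hmemS In' hInS
  obtain ⟨am, bm, _, habm, _, hImeq⟩ := h𝕀.1 Im hIm𝕀
  obtain ⟨an, bn', _, habn, _, hIneq⟩ := h𝕀.1 In' hIn𝕀
  have hinfm : sInf ((Im : Finset ℕ) : Set ℕ) = am := by
    rw [hImeq]; exact (icc_least habm).csInf_eq
  have hsupn : sSup ((In' : Finset ℕ) : Set ℕ) = bn' := by
    rw [hIneq]; exact (icc_greatest habn).csSup_eq
  have key : Jj = Im ∩ In' := by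
    ext x
    constructor
    · intro hx
      exact Finset.mem_inter.mpr
        ⟨(hJ x).1 hx Im hIm𝕀 hjIm (hmemS Im hImS).2.2,
         (hJ x).1 hx In' hIn𝕀 hjIn (hmemS In' hInS).2.2⟩
    · intro hx
      obtain ⟨hxm, hxn⟩ := Finset.mem_inter.mp hx
      refine (hJ x).2 ?_
      intro I hI hjI hyI
      have hIS : I ∈ S := Finset.mem_filter.mpr ⟨hI, hjI, hyI⟩
      obtain ⟨a, b, _, hab, _, hIeq⟩ := h𝕀.1 I hI
      have hinf : sInf ((I : Finset ℕ) : Set ℕ) = a := by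
        rw [hIeq]; exact (icc_least hab).csInf_eq
      have hsup : sSup ((I : Finset ℕ) : Set ℕ) = b := by
        rw [hIeq]; exact (icc_greatest hab).csSup_eq
      have h1 : a ≤ am := by have := hmax I hIS; rw [hinf, hinfm] at this; exact this
      have h2 : bn' ≤ b := by have := hmin I hIS; rw [hsup, hsupn] at this; exact this
      rw [hImeq] at hxm; rw [hIneq] at hxn
      simp only [Finset.mem_Icc] at hxm hxn
      rw [hIeq]; exact Finset.mem_Icc.mpr ⟨by omega, by omega⟩
  rw [key]
  exact hcl Im hIm𝕀 In' hIn𝕀 ⟨j, Finset.mem_inter.mpr ⟨hjIm, hjIn⟩⟩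

lemma Aj_cases {j μ : ℕ} {A : Edge 𝕀 → ℕ} (hA : IsAj 𝕀 j μ A) (H : Edge 𝕀) :
    (j ∈ H.1 ∧ IsLeast (H.1 : Set ℕ) μ ∧ A H = j) ∨
    (¬(j ∈ H.1 ∧ IsLeast (H.1 : Set ℕ) μ) ∧ IsLeast (H.1 : Set ℕ) (A H)) := by
  by_cases h : j ∈ H.1 ∧ IsLeast (H.1 : Set ℕ) μ
  · exact Or.inl ⟨h.1, h.2, (hA H).1 h⟩
  · exact Or.inr ⟨h, (hA H).2 h⟩

lemma Aj_orientation {j μ : ℕ} {A : Edge 𝕀 → ℕ} (hA : IsAj 𝕀 j μ A) :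
    IsOrientation 𝕀 A := by
  intro H
  rcases Aj_cases hA H with ⟨hj, _, hAH⟩ | ⟨_, hL⟩
  · rw [hAH]; exact hj
  · exact Finset.mem_coe.mp hL.1

lemma Aj_acyclic (h𝕀 : IsIntervalHypergraph n 𝕀) {j μ : ℕ} {Jj : Finset ℕ}
    (hjJ : InJI 𝕀 j) (hJ : IsJj 𝕀 j Jj) (hμ : IsLeast (Jj : Set ℕ) μ)
    {A : Edge 𝕀 → ℕ} (hA : IsAj 𝕀 j μ A) : IsAcyclic 𝕀 A := by
  have hμ1 : 1 ≤ μ := mu_ge_one h𝕀 hjJ hJ hμ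
  have hμj : μ < j := mu_lt h𝕀 hjJ hJ hμ
  set g : ℕ → ℕ := fun x => if x = j then 2 * μ - 1 else 2 * x with hg
  have step : ∀ (H : Edge 𝕀) (b : ℕ), b ∈ H.1 → b ≠ A H → g (A H) < g b := by
    intro H b hbH hbne
    rcases Aj_cases hA H with ⟨hjH, hLμ, hAH⟩ | ⟨hnP, hLA⟩
    · rw [hAH]
      have hbj : b ≠ j := by rw [hAH] at hbne; exact hbne
      have hμb : μ ≤ b := hLμ.2 (Finset.mem_coe.mpr hbH)
      simp only [hg, if_pos rfl, if_neg hbj]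
      omega
    · have hAlt : A H < b :=
        lt_of_le_of_ne (hLA.2 (Finset.mem_coe.mpr hbH)) (fun h => hbne h.symm)
      by_cases hbj : b = j
      · rw [hbj] at hbH hbne hAlt ⊢
        have hAnej : A H ≠ j := fun h => hbne h.symm
        have hjH : j ∈ H.1 := hbH
        have hfam : Jj ⊆ H.1 :=
          J_subset hJ H.2 hjH ⟨A H, Finset.mem_coe.mp hLA.1, hAlt⟩
        have hμH : μ ∈ H.1 := hfam (Finset.mem_coe.mp hμ.1)
        have hAμ : A H ≤ μ := hLA.2 (Finset.mem_coe.mpr hμH)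
        have hAneμ : A H ≠ μ := fun h => hnP ⟨hjH, h ▸ hLA⟩
        simp only [hg, if_neg hAnej, if_pos rfl]
        omega
      · by_cases hAj : A H = j
        · have h1 : j < b := hAj ▸ hAlt
          simp only [hg, if_pos hAj, if_neg hbj]
          omega
        · simp only [hg, if_neg hAj, if_neg hbj]; omega
  rintro ⟨k, H, hk2, hcyc, hstep⟩
  have mono : ∀ p, p < k → g (A (H p)) < g (A (H (p + 1))) := fun p hp =>
    step (H p) (A (H (p + 1))) (hstep p hp).1 (hstep p hp).2
  have chain : ∀ p, p ≤ k → 1 ≤ p → g (A (H 0)) < g (A (H p)) := by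
    intro p
    induction p with
    | zero => omega
    | succ q ih =>
      intro hq _
      rcases Nat.eq_zero_or_pos q with h0 | h0
      · subst h0; exact mono 0 (by omega)
      · exact lt_trans (ih (by omega) h0) (mono q (by omega))
  have := chain k le_rfl (by omega)
  rw [hcyc] at this
  exact lt_irrefl _ this

end Aux

/-- For an interval hypergraph `𝕀` closed under intersection and
`i, j ∈ 𝒥_𝕀`, one has `A_i ≤ A_j` in `P_𝕀` iff `J_i = J_j` and `i ≤ j`. -/
theorem stmt14 (n : ℕ) (hn : 1 ≤ n) (𝕀 : Finset (Finset ℕ))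
    (h𝕀 : IsIntervalHypergraph n 𝕀) (hcl : ClosedUnderIntersection 𝕀)
    (i j : ℕ) (hiJ : InJI 𝕀 i) (hjJ : InJI 𝕀 j)
    (Ji Jj : Finset ℕ) (hJi : IsJj 𝕀 i Ji) (hJj : IsJj 𝕀 j Jj)
    (μi μj : ℕ) (hμi : IsLeast (Ji : Set ℕ) μi) (hμj : IsLeast (Jj : Set ℕ) μj)
    (Ai Aj : Edge 𝕀 → ℕ) (hAi : IsAj 𝕀 i μi Ai) (hAj : IsAj 𝕀 j μj Aj) :
    leP n 𝕀 Ai Aj ↔ (Ji = Jj ∧ i ≤ j) := by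
  classical
  have hi1 := (mem_bounds_s14 h𝕀 hiJ).1
  have hin := (mem_bounds_s14 h𝕀 hiJ).2
  have hj1 := (mem_bounds_s14 h𝕀 hjJ).1
  have hjn := (mem_bounds_s14 h𝕀 hjJ).2
  have hμii : μi < i := mu_lt h𝕀 hiJ hJi hμi
  have hμjj : μj < j := mu_lt h𝕀 hjJ hJj hμj
  have hJi𝕀 : Ji ∈ 𝕀 := J_mem_of_closed h𝕀 hcl hiJ hJi
  set H0 : Edge 𝕀 := ⟨Ji, hJi𝕀⟩ with hH0
  have hAiJi : Ai H0 = i := (hAi H0).1 ⟨self_mem_J hJi, hμi⟩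
  constructor
  · intro hle
    have pw := leP_pointwise hle H0
    rcases Aj_cases hAj H0 with ⟨hjJi, hLμj, hAjJi⟩ | ⟨_, hL⟩
    · have hij : i ≤ j := by rw [hAiJi, hAjJi] at pw; exact pw
      have hμeq : μi = μj := hμi.unique hLμj
      have hJeq : Ji = Jj := by
        ext x
        constructor
        · intro hx
          refine (hJj x).2 ?_
          intro I hI hjI hyI
          have hsubI : Jj ⊆ I := J_subset hJj hI hjI hyI
          have hμjI : μj ∈ I := hsubI (Finset.mem_coe.mp hμj.1)
          obtain ⟨a, b, _, hab, _, hIeq⟩ := h𝕀.1 I hI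
          have hiI : i ∈ I := by
            rw [hIeq] at hμjI hjI ⊢
            simp only [Finset.mem_Icc] at hμjI hjI ⊢
            omega
          exact (hJi x).1 hx I hI hiI ⟨μj, hμjI, by omega⟩
        · intro hx
          refine (hJi x).2 ?_
          intro I hI hiI ⟨y, hyI, hyi⟩
          have hsubI : Ji ⊆ I := J_subset hJi hI hiI ⟨y, hyI, hyi⟩
          have hjI : j ∈ I := hsubI hjJi
          exact (hJj x).1 hx I hI hjI ⟨y, hyI, by omega⟩
      exact ⟨hJeq, hij⟩
    · have : Aj H0 = μi := hL.unique hμi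
      rw [hAiJi, this] at pw
      omega
  · rintro ⟨hJeq, hij⟩
    have hμj' : IsLeast (Ji : Set ℕ) μj := by rw [hJeq]; exact hμj
    have hμeq : μi = μj := hμi.unique hμj'
    have hjJi : j ∈ Ji := by rw [hJeq]; exact self_mem_J hJj
    rcases eq_or_lt_of_le hij with rfl | hlt
    · have hAeq : Ai = Aj := by
        funext H
        rcases Aj_cases hAi H with ⟨h1, h2, h3⟩ | ⟨h1, h2⟩
        · rw [h3, (hAj H).1 ⟨h1, hμeq ▸ h2⟩]
        · exact h2.unique ((hAj H).2 (by rw [← hμeq]; exact h1))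
      rw [hAeq]
      exact Relation.ReflTransGen.refl
    · have hPQ : ∀ H : Edge 𝕀,
          (i ∈ H.1 ∧ IsLeast (H.1 : Set ℕ) μi) ↔ (j ∈ H.1 ∧ IsLeast (H.1 : Set ℕ) μj) := by
        intro H
        obtain ⟨a, b, _, hab, _, hHeq⟩ := h𝕀.1 H.1 H.2
        constructor
        · rintro ⟨hiH, hL⟩
          have hsub : Ji ⊆ H.1 :=
            J_subset hJi H.2 hiH ⟨μi, Finset.mem_coe.mp hL.1, hμii⟩
          exact ⟨hsub hjJi, hμeq ▸ hL⟩
        · rintro ⟨hjH, hL⟩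
          have haL : IsLeast ((Finset.Icc a b : Finset ℕ) : Set ℕ) μj := hHeq ▸ hL
          have haeq : μj = a := haL.unique (icc_least hab)
          have hiH : i ∈ H.1 := by
            rw [hHeq] at hjH ⊢
            simp only [Finset.mem_Icc] at hjH ⊢
            omega
          exact ⟨hiH, hμeq ▸ hL⟩
      have hAiacyc : AcycOr 𝕀 Ai :=
        ⟨Aj_orientation hAi, Aj_acyclic h𝕀 hiJ hJi hμi hAi⟩
      have hAjacyc : AcycOr 𝕀 Aj :=
        ⟨Aj_orientation hAj, Aj_acyclic h𝕀 hjJ hJj hμj hAj⟩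
      have hAjJi : Aj H0 = j := (hAj H0).1 ⟨hjJi, hμj'⟩
      have hne : Ai ≠ Aj := by
        intro h
        have := congrFun h H0
        rw [hAiJi, hAjJi] at this
        omega
      refine Relation.ReflTransGen.single ⟨hAiacyc, hAjacyc, i, j, hne, hi1, hlt, hjn, ?_⟩
      intro H
      by_cases hP : i ∈ H.1 ∧ IsLeast (H.1 : Set ℕ) μi
      · have hQ := (hPQ H).1 hP
        have e1 : Ai H = i := (hAi H).1 hP
        have e2 : Aj H = j := (hAj H).1 hQ
        exact ⟨fun _ => ⟨e1, e2⟩, fun _ _ => by simp [e1, e2]⟩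
      · have hQ : ¬(j ∈ H.1 ∧ IsLeast (H.1 : Set ℕ) μj) := fun hq => hP ((hPQ H).2 hq)
        have e1 : IsLeast (H.1 : Set ℕ) (Ai H) := (hAi H).2 hP
        have e2 : IsLeast (H.1 : Set ℕ) (Aj H) := (hAj H).2 hQ
        have heq : Ai H = Aj H := e1.unique e2
        refine ⟨fun hne' => absurd heq hne', fun hiH hjH => ?_⟩
        constructor
        · intro h
          exfalso
          have hsub : Jj ⊆ H.1 := J_subset hJj H.2 hjH ⟨i, hiH, hlt⟩
          have hμjH : μj ∈ H.1 := hsub (Finset.mem_coe.mp hμj.1)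
          have := e1.2 (Finset.mem_coe.mpr hμjH)
          omega
        · intro h
          exfalso
          have := e2.2 (Finset.mem_coe.mpr hiH)
          omega
end IHL
end

section
/- Let 𝕀 be an interval hypergraph on [n] that is closed under intersection. Then for every j ∈ 𝒥_𝕀, the acyclic orientation A_j is join irreducible in the hypergraphic poset P_𝕀, i.e., A_j is not the minimal element of P_𝕀 and A_j covers exactly one element of P_𝕀. -/
namespace IHL

open Classical in
noncomputable def Oor (𝕀 : Finset (Finset ℕ)) (j μj : ℕ) (Aj : Edge 𝕀 → ℕ) (i : ℕ) :
    Edge 𝕀 → ℕ :=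
  fun H => if j ∈ H.1 ∧ IsLeast (H.1 : Set ℕ) μj then i else Aj H

/-- Auxiliary: total weight of an orientation. -/
noncomputable def wgt (𝕀 : Finset (Finset ℕ)) (O : Edge 𝕀 → ℕ) : ℕ :=
  ∑ H ∈ 𝕀.attach, O H

lemma acyclic_of_pot {𝕀 : Finset (Finset ℕ)} (O : Edge 𝕀 → ℕ) (φ : ℕ → ℕ)
    (h : ∀ H : Edge 𝕀, ∀ b ∈ H.1, b ≠ O H → φ (O H) < φ b) : IsAcyclic 𝕀 O := by
  rintro ⟨k, H, hk, hk0, hcyc⟩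
  have step : ∀ p < k, φ (O (H p)) < φ (O (H (p + 1))) := fun p hp =>
    h (H p) _ (hcyc p hp).1 (hcyc p hp).2
  have key : ∀ p ≤ k, 1 ≤ p → φ (O (H 0)) < φ (O (H p)) := by
    intro p
    induction p with
    | zero => exact fun _ h' => absurd h' (by omega)
    | succ q ih =>
      intro hk' _
      rcases Nat.eq_zero_or_pos q with h0 | h1
      · subst h0; exact step 0 (by omega)
      · exact (ih (by omega) h1).trans (step q (by omega))
  have hkey := key k le_rfl (by omega)
  rw [hk0] at hkey
  exact lt_irrefl _ hkey

lemma wgt_lt_of_flip' {n : ℕ} {𝕀 : Finset (Finset ℕ)} {O O' : Edge 𝕀 → ℕ}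
    (h : FlipStep n 𝕀 O O') : wgt 𝕀 O < wgt 𝕀 O' := by
  obtain ⟨_, _, i, j', hne, h1, hij, hjn, hH⟩ := h
  apply Finset.sum_lt_sum
  · intro H _
    by_cases he : O H = O' H
    · exact le_of_eq he
    · obtain ⟨e1, e2⟩ := (hH H).1 he; omega
  · obtain ⟨H₀, hH₀⟩ := Function.ne_iff.mp hne
    refine ⟨H₀, Finset.mem_attach _ _, ?_⟩
    obtain ⟨e1, e2⟩ := (hH H₀).1 hH₀
    omega

lemma wgt_le_of_leP {n : ℕ} {𝕀 : Finset (Finset ℕ)} {A B : Edge 𝕀 → ℕ}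
    (h : leP n 𝕀 A B) : wgt 𝕀 A ≤ wgt 𝕀 B := by
  induction h with
  | refl => exact le_rfl
  | tail _ hstep ih => exact ih.trans (wgt_lt_of_flip' hstep).le

lemma wgt_lt_of_ltP {n : ℕ} {𝕀 : Finset (Finset ℕ)} {A B : Edge 𝕀 → ℕ}
    (h : ltP n 𝕀 A B) : wgt 𝕀 A < wgt 𝕀 B := by
  obtain ⟨hle, hne⟩ := h
  rcases Relation.ReflTransGen.cases_head hle with heq | ⟨C, hstep, hCB⟩
  · exact absurd heq hne
  · exact lt_of_lt_of_le (wgt_lt_of_flip' hstep) (wgt_le_of_leP hCB)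

/-- For an interval hypergraph `𝕀` closed under intersection and
`j ∈ 𝒥_𝕀`, the acyclic orientation `A_j` is join irreducible in `P_𝕀`: it is not the
minimal element and it covers exactly one element. -/
theorem stmt15 (n : ℕ) (hn : 1 ≤ n) (𝕀 : Finset (Finset ℕ))
    (h𝕀 : IsIntervalHypergraph n 𝕀) (hcl : ClosedUnderIntersection 𝕀)
    (j : ℕ) (hjJ : InJI 𝕀 j)
    (Jj : Finset ℕ) (hJj : IsJj 𝕀 j Jj)
    (μj : ℕ) (hμj : IsLeast (Jj : Set ℕ) μj)
    (Aj : Edge 𝕀 → ℕ) (hAj : IsAj 𝕀 j μj Aj) :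
    AcycOr 𝕀 Aj ∧
    (¬∀ B, AcycOr 𝕀 B → leP n 𝕀 Aj B) ∧
    (∃! B, AcycOr 𝕀 B ∧ CoversP n 𝕀 B Aj) := by
  classical
  obtain ⟨hrep, hsing⟩ := h𝕀
  -- j belongs to Jj
  have hjJj : j ∈ Jj := (hJj j).mpr (fun I _ hjI _ => hjI)
  -- bounds on j
  obtain ⟨I₀, hI₀, hjI₀, y₀, hy₀, hy₀j⟩ := hjJ
  have hjbounds : 1 ≤ j ∧ j ≤ n := by
    obtain ⟨a, b, ha1, hab, hbn, hIeq⟩ := hrep I₀ hI₀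
    subst hIeq
    rw [Finset.mem_Icc] at hjI₀
    omega
  -- intervals contain everything between two members
  have hbetween : ∀ H ∈ 𝕀, ∀ u ∈ H, ∀ v ∈ H, ∀ w, u ≤ w → w ≤ v → w ∈ H := by
    intro H hH u hu v hv w h1 h2
    obtain ⟨c, d, _, _, _, rfl⟩ := hrep H hH
    rw [Finset.mem_Icc] at hu hv ⊢
    omega
  -- if some a < j is in H but j is not, then H lies entirely below j
  have hnoj : ∀ H ∈ 𝕀, ∀ a ∈ H, a < j → j ∉ H → ∀ x ∈ H, x < j := by
    intro H hH a ha haj hjH x hx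
    obtain ⟨c, d, _, _, _, rfl⟩ := hrep H hH
    rw [Finset.mem_Icc] at ha hx
    by_contra hcon
    exact hjH (Finset.mem_Icc.mpr ⟨by omega, by omega⟩)
  -- Jj is contained in every hyperedge containing j and something below j
  have hμmem : ∀ H ∈ 𝕀, j ∈ H → ∀ y ∈ H, y < j → ∀ x ∈ Jj, x ∈ H :=
    fun H hH hjH y hyH hyj x hx => (hJj x).mp hx H hH hjH ⟨y, hyH, hyj⟩
  -- j - 1 ∈ Jj, hence μj < j
  have hj1Jj : j - 1 ∈ Jj := by
    apply (hJj (j - 1)).mpr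
    rintro I hI hjI ⟨y, hyI, hyj⟩
    exact hbetween I hI y hyI j hjI (j - 1) (by omega) (by omega)
  have hμJj : μj ∈ Jj := hμj.1
  have hμj_lt : μj < j := by
    have := hμj.2 (Finset.mem_coe.mpr hj1Jj)
    omega
  -- Jj ∈ 𝕀
  have hJj𝕀 : Jj ∈ 𝕀 := by
    have key : ∀ T : Finset (Finset ℕ), (∀ I ∈ T, I ∈ 𝕀 ∧ j ∈ I) → T.Nonempty →
        ∃ K ∈ 𝕀, j ∈ K ∧ ∀ x, x ∈ K ↔ ∀ I ∈ T, x ∈ I := by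
      intro T
      induction T using Finset.induction_on with
      | empty => exact fun _ h => absurd h (by simp)
      | insert a T ha ih =>
        intro hmem _
        rcases T.eq_empty_or_nonempty with rfl | hTne
        · refine ⟨a, (hmem a (by simp)).1, (hmem a (by simp)).2, ?_⟩
          intro x; simp
        · obtain ⟨K, hK, hjK, hKiff⟩ :=
            ih (fun I hI => hmem I (Finset.mem_insert_of_mem hI)) hTne
          have haI : a ∈ 𝕀 := (hmem a (Finset.mem_insert_self a T)).1
          have hja : j ∈ a := (hmem a (Finset.mem_insert_self a T)).2
          refine ⟨a ∩ K, hcl a haI K hK ⟨j, Finset.mem_inter.mpr ⟨hja, hjK⟩⟩,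
            Finset.mem_inter.mpr ⟨hja, hjK⟩, ?_⟩
          intro x
          simp only [Finset.mem_inter, hKiff x, Finset.mem_insert]
          constructor
          · rintro ⟨h1, h2⟩ I (rfl | hI)
            · exact h1
            · exact h2 I hI
          · intro h
            exact ⟨h a (Or.inl rfl), fun I hI => h I (Or.inr hI)⟩
    set S : Finset (Finset ℕ) := 𝕀.filter (fun I => j ∈ I ∧ ∃ y ∈ I, y < j) with hS
    have hSmem : ∀ I ∈ S, I ∈ 𝕀 ∧ j ∈ I := by
      intro I hI
      rw [hS, Finset.mem_filter] at hI
      exact ⟨hI.1, hI.2.1⟩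
    have hSne : S.Nonempty := ⟨I₀, by rw [hS, Finset.mem_filter]; exact ⟨hI₀, hjI₀, y₀, hy₀, hy₀j⟩⟩
    obtain ⟨K, hK, hjK, hKiff⟩ := key S hSmem hSne
    have : Jj = K := by
      apply Finset.ext
      intro x
      rw [hJj x, hKiff x]
      constructor
      · intro h I hI
        rw [hS, Finset.mem_filter] at hI
        exact h I hI.1 hI.2.1 hI.2.2
      · intro h I hI hjI hyI
        exact h I (by rw [hS, Finset.mem_filter]; exact ⟨hI, hjI, hyI⟩)
    rw [this]; exact hK
  -- interval representation of Jj
  obtain ⟨a₀, b₀, ha₀1, hab₀, hb₀n, hJeq⟩ := hrep Jj hJj𝕀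
  have hμa : μj = a₀ := by
    have h1 : μj ≤ a₀ := hμj.2 (Finset.mem_coe.mpr (by rw [hJeq]; exact Finset.mem_Icc.mpr ⟨le_rfl, hab₀⟩))
    have h2 : a₀ ≤ μj := by
      have := hμJj; rw [hJeq, Finset.mem_Icc] at this; omega
    omega
  have hμ1 : 1 ≤ μj := by omega
  have hjb₀ : j ≤ b₀ := by
    have := hjJj; rw [hJeq, Finset.mem_Icc] at this; omega
  have hmemJj : ∀ x, μj ≤ x → x ≤ j → x ∈ Jj := by
    intro x h1 h2
    rw [hJeq, Finset.mem_Icc]; omega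
  -- Jj as an edge, and the key predicate P
  have hPJj : j ∈ (⟨Jj, hJj𝕀⟩ : Edge 𝕀).1 ∧ IsLeast (((⟨Jj, hJj𝕀⟩ : Edge 𝕀).1 : Finset ℕ) : Set ℕ) μj :=
    ⟨hjJj, hμj⟩
  -- every edge satisfying P contains all of [μj, j]
  have hJsubH : ∀ H : Edge 𝕀, (j ∈ H.1 ∧ IsLeast (H.1 : Set ℕ) μj) →
      ∀ x, μj ≤ x → x ≤ j → x ∈ H.1 := by
    intro H hP x h1 h2
    exact hμmem H.1 H.2 hP.1 μj (Finset.mem_coe.mp hP.2.1) hμj_lt x (hmemJj x h1 h2)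
  -- if j ∈ H and some a < j is in H, then μj ∈ H
  have hμinH : ∀ H : Edge 𝕀, j ∈ H.1 → ∀ a ∈ H.1, a < j → μj ∈ H.1 :=
    fun H hj a ha haj => hμmem H.1 H.2 hj a ha haj μj hμJj
  -- Aj is an acyclic orientation
  have hAjOr : IsOrientation 𝕀 Aj := by
    intro H
    by_cases hP : j ∈ H.1 ∧ IsLeast (H.1 : Set ℕ) μj
    · rw [(hAj H).1 hP]; exact hP.1
    · exact Finset.mem_coe.mp ((hAj H).2 hP).1
  have hAjAc : IsAcyclic 𝕀 Aj := by
    apply acyclic_of_pot _ (fun x => if x = j then 2 * μj else 2 * x + 1)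
    intro H b hb hbO
    by_cases hP : j ∈ H.1 ∧ IsLeast (H.1 : Set ℕ) μj
    · have hA := (hAj H).1 hP
      rw [hA] at hbO ⊢
      have hbμ : μj ≤ b := hP.2.2 (Finset.mem_coe.mpr hb)
      split_ifs <;> omega
    · have hL := (hAj H).2 hP
      have hab : Aj H < b := lt_of_le_of_ne (hL.2 (Finset.mem_coe.mpr hb)) (Ne.symm hbO)
      rcases eq_or_ne b j with hbj | hbj
      · have hmu : μj ∈ H.1 := hμinH H (hbj ▸ hb) (Aj H) (Finset.mem_coe.mp hL.1) (by omega)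
        have haμ : Aj H ≤ μj := hL.2 (Finset.mem_coe.mpr hmu)
        have hane : Aj H ≠ μj := fun h => hP ⟨hbj ▸ hb, h ▸ hL⟩
        split_ifs <;> omega
      · split_ifs <;> omega
  -- values of the candidate lower neighbours at edges
  have hOval : ∀ i (H : Edge 𝕀), (j ∈ H.1 ∧ IsLeast (H.1 : Set ℕ) μj → Oor 𝕀 j μj Aj i H = i) ∧
      (¬(j ∈ H.1 ∧ IsLeast (H.1 : Set ℕ) μj) → Oor 𝕀 j μj Aj i H = Aj H) := by
    intro i H
    constructor
    · intro hP; simp only [Oor, if_pos hP]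
    · intro hP; simp only [Oor, if_neg hP]
  -- distinctness at the edge Jj
  have hOJj : ∀ i, Oor 𝕀 j μj Aj i ⟨Jj, hJj𝕀⟩ = i := fun i => (hOval i _).1 hPJj
  have hAjJj : Aj ⟨Jj, hJj𝕀⟩ = j := (hAj _).1 hPJj
  have hOne : ∀ i i', i ≠ i' → Oor 𝕀 j μj Aj i ≠ Oor 𝕀 j μj Aj i' := by
    intro i i' hne h
    have := congrFun h ⟨Jj, hJj𝕀⟩
    rw [hOJj, hOJj] at this
    exact hne this
  have hOAne : ∀ i, i ≠ j → Oor 𝕀 j μj Aj i ≠ Aj := by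
    intro i hne h
    have := congrFun h ⟨Jj, hJj𝕀⟩
    rw [hOJj, hAjJj] at this
    exact hne this
  -- Free i → O_ i is an acyclic orientation
  have hOfree : ∀ i, μj ≤ i → i < j →
      (∀ K ∈ 𝕀, (∀ x ∈ K, μj ≤ x ∧ x < j) → i ∈ K → ∀ y ∈ K, i ≤ y) →
      AcycOr 𝕀 (Oor 𝕀 j μj Aj i) := by
    intro i hiμ hij hfree
    have hiJ : ∀ H : Edge 𝕀, (j ∈ H.1 ∧ IsLeast (H.1 : Set ℕ) μj) → i ∈ H.1 :=
      fun H hP => hJsubH H hP i hiμ hij.le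
    constructor
    · intro H
      by_cases hP : j ∈ H.1 ∧ IsLeast (H.1 : Set ℕ) μj
      · rw [(hOval i H).1 hP]; exact hiJ H hP
      · rw [(hOval i H).2 hP]; exact Finset.mem_coe.mp ((hAj H).2 hP).1
    · apply acyclic_of_pot _ (fun x => if x = i then 2 * μj else 2 * x + 1)
      intro H b hb hbO
      by_cases hP : j ∈ H.1 ∧ IsLeast (H.1 : Set ℕ) μj
      · rw [(hOval i H).1 hP] at hbO ⊢
        have hbμ : μj ≤ b := hP.2.2 (Finset.mem_coe.mpr hb)
        split_ifs <;> omega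
      · rw [(hOval i H).2 hP] at hbO ⊢
        have hL := (hAj H).2 hP
        have hab : Aj H < b := lt_of_le_of_ne (hL.2 (Finset.mem_coe.mpr hb)) (Ne.symm hbO)
        have haH : Aj H ∈ H.1 := Finset.mem_coe.mp hL.1
        rcases eq_or_ne b i with hbi | hbi
        · -- need Aj H < μj
          have haμ : Aj H < μj := by
            by_contra hge
            push_neg at hge
            by_cases hjH : j ∈ H.1
            · have hmu : μj ∈ H.1 := hμinH H hjH (Aj H) haH (by omega)
              have h1 : Aj H ≤ μj := hL.2 (Finset.mem_coe.mpr hmu)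
              have h2 : Aj H = μj := le_antisymm h1 hge
              exact hP ⟨hjH, h2 ▸ hL⟩
            · have hbd : ∀ x ∈ H.1, μj ≤ x ∧ x < j := by
                intro x hx
                refine ⟨le_trans hge (hL.2 (Finset.mem_coe.mpr hx)), ?_⟩
                exact hnoj H.1 H.2 (Aj H) haH (by omega) hjH x hx
              have := hfree H.1 H.2 hbd (hbi ▸ hb) (Aj H) haH
              omega
          split_ifs <;> omega
        · split_ifs <;> omega
  -- Free i → single increasing flip from O_ i up to Aj
  have hflipAj : ∀ i, μj ≤ i → i < j →
      (∀ K ∈ 𝕀, (∀ x ∈ K, μj ≤ x ∧ x < j) → i ∈ K → ∀ y ∈ K, i ≤ y) →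
      FlipStep n 𝕀 (Oor 𝕀 j μj Aj i) Aj := by
    intro i hiμ hij hfree
    refine ⟨hOfree i hiμ hij hfree, ⟨hAjOr, hAjAc⟩, i, j, hOAne i (by omega), by omega, hij,
      hjbounds.2, ?_⟩
    intro H
    constructor
    · intro hne'
      by_cases hP : j ∈ H.1 ∧ IsLeast (H.1 : Set ℕ) μj
      · exact ⟨(hOval i H).1 hP, (hAj H).1 hP⟩
      · exact absurd ((hOval i H).2 hP) hne'
    · intro hiH hjH
      by_cases hP : j ∈ H.1 ∧ IsLeast (H.1 : Set ℕ) μj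
      · rw [(hOval i H).1 hP, (hAj H).1 hP]
        simp
      · rw [(hOval i H).2 hP]
        have hL := (hAj H).2 hP
        constructor
        · intro hai
          exfalso
          have hmu : μj ∈ H.1 := hμinH H hjH (Aj H) (Finset.mem_coe.mp hL.1) (by omega)
          have h1 : Aj H ≤ μj := hL.2 (Finset.mem_coe.mpr hmu)
          have h2 : Aj H = μj := by omega
          exact hP ⟨hjH, h2 ▸ hL⟩
        · intro hAjj
          exfalso
          have := hL.2 (Finset.mem_coe.mpr hiH)
          omega
  -- characterization of single flips below Aj
  have hchar : ∀ C : Edge 𝕀 → ℕ, AcycOr 𝕀 C → (∃ i j', IsIncFlip n 𝕀 i j' C Aj) →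
      ∃ i, (μj ≤ i ∧ i < j ∧ ∀ K ∈ 𝕀, (∀ x ∈ K, μj ≤ x ∧ x < j) → i ∈ K → ∀ y ∈ K, i ≤ y) ∧
        C = Oor 𝕀 j μj Aj i := by
    rintro C ⟨hCor, hCac⟩ ⟨i, j', hne, h1i, hij', hj'n, hflip⟩
    obtain ⟨H₀, hH₀⟩ := Function.ne_iff.mp hne
    obtain ⟨hCi, hAjj'⟩ := (hflip H₀).1 hH₀
    have hPH₀ : j ∈ H₀.1 ∧ IsLeast (H₀.1 : Set ℕ) μj := by
      by_contra hP
      have hL := (hAj H₀).2 hP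
      rw [hAjj'] at hL
      have := hL.2 (Finset.mem_coe.mpr (hCi ▸ hCor H₀))
      omega
    have hj'j : j' = j := by
      have := (hAj H₀).1 hPH₀
      omega
    rw [hj'j] at hij' hflip
    have hiH₀ : i ∈ H₀.1 := hCi ▸ hCor H₀
    have hiμ : μj ≤ i := hPH₀.2.2 (Finset.mem_coe.mpr hiH₀)
    have hCeq : C = Oor 𝕀 j μj Aj i := by
      funext H
      by_cases hP : j ∈ H.1 ∧ IsLeast (H.1 : Set ℕ) μj
      · rw [(hOval i H).1 hP]
        exact ((hflip H).2 (hJsubH H hP i hiμ hij'.le) hP.1).mpr ((hAj H).1 hP)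
      · rw [(hOval i H).2 hP]
        by_contra hne'
        obtain ⟨hCi', hAj'⟩ := (hflip H).1 hne'
        have hL := (hAj H).2 hP
        rw [hAj'] at hL
        have := hL.2 (Finset.mem_coe.mpr (hCi' ▸ hCor H))
        omega
    refine ⟨i, ⟨hiμ, hij', ?_⟩, hCeq⟩
    intro K hK hKbd hiK y hyK
    by_contra hyi
    push_neg at hyi
    have hPK : ¬(j ∈ (⟨K, hK⟩ : Edge 𝕀).1 ∧ IsLeast (((⟨K, hK⟩ : Edge 𝕀).1 : Finset ℕ) : Set ℕ) μj) := by
      intro hP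
      exact absurd (hKbd j hP.1).2 (lt_irrefl j)
    have hLK := (hAj ⟨K, hK⟩).2 hPK
    have hCK : C ⟨K, hK⟩ = Aj ⟨K, hK⟩ := by rw [hCeq]; exact (hOval i ⟨K, hK⟩).2 hPK
    have haK : Aj ⟨K, hK⟩ ∈ K := Finset.mem_coe.mp hLK.1
    have hay : Aj ⟨K, hK⟩ ≤ y := hLK.2 (Finset.mem_coe.mpr hyK)
    have haH₀ : Aj ⟨K, hK⟩ ∈ H₀.1 :=
      hJsubH H₀ hPH₀ _ (hKbd _ haK).1 (le_of_lt (hKbd _ haK).2)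
    apply hCac
    refine ⟨2, fun p => if p = 1 then ⟨K, hK⟩ else H₀, le_rfl, by norm_num, ?_⟩
    intro p hp
    interval_cases p
    · have g1 : C ⟨K, hK⟩ ∈ H₀.1 := by rw [hCK]; exact haH₀
      have g2 : C ⟨K, hK⟩ ≠ C H₀ := by rw [hCK, hCi]; omega
      simpa using ⟨g1, g2⟩
    · have g1 : C H₀ ∈ K := by rw [hCi]; exact hiK
      have g2 : C H₀ ≠ C ⟨K, hK⟩ := by rw [hCK, hCi]; omega
      simpa using ⟨g1, g2⟩
  -- flips between candidate lower neighbours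
  have hflip2 : ∀ i i', μj ≤ i → i < j → μj ≤ i' → i' < j →
      (∀ K ∈ 𝕀, (∀ x ∈ K, μj ≤ x ∧ x < j) → i ∈ K → ∀ y ∈ K, i ≤ y) →
      (∀ K ∈ 𝕀, (∀ x ∈ K, μj ≤ x ∧ x < j) → i' ∈ K → ∀ y ∈ K, i' ≤ y) →
      i < i' → FlipStep n 𝕀 (Oor 𝕀 j μj Aj i) (Oor 𝕀 j μj Aj i') := by
    intro i i' hiμ hij hi'μ hi'j hfree hfree' hlt
    refine ⟨hOfree i hiμ hij hfree, hOfree i' hi'μ hi'j hfree', i, i',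
      hOne i i' (by omega), by omega, hlt, by omega, ?_⟩
    intro H
    constructor
    · intro hne'
      by_cases hP : j ∈ H.1 ∧ IsLeast (H.1 : Set ℕ) μj
      · exact ⟨(hOval i H).1 hP, (hOval i' H).1 hP⟩
      · rw [(hOval i H).2 hP, (hOval i' H).2 hP] at hne'
        exact absurd rfl hne'
    · intro hiH hi'H
      by_cases hP : j ∈ H.1 ∧ IsLeast (H.1 : Set ℕ) μj
      · rw [(hOval i H).1 hP, (hOval i' H).1 hP]; simp
      · rw [(hOval i H).2 hP, (hOval i' H).2 hP]
        have hL := (hAj H).2 hP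
        constructor
        · intro hai
          exfalso
          by_cases hjH : j ∈ H.1
          · have hmu : μj ∈ H.1 := hμinH H hjH (Aj H) (Finset.mem_coe.mp hL.1) (by omega)
            have h1 : Aj H ≤ μj := hL.2 (Finset.mem_coe.mpr hmu)
            have h2 : Aj H = μj := by omega
            exact hP ⟨hjH, h2 ▸ hL⟩
          · have hbd : ∀ x ∈ H.1, μj ≤ x ∧ x < j := by
              intro x hx
              refine ⟨?_, hnoj H.1 H.2 (Aj H) (Finset.mem_coe.mp hL.1) (by omega) hjH x hx⟩
              have := hL.2 (Finset.mem_coe.mpr hx)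
              omega
            have := hfree' H.1 H.2 hbd hi'H (Aj H) (Finset.mem_coe.mp hL.1)
            omega
        · intro hai'
          exfalso
          have := hL.2 (Finset.mem_coe.mpr hiH)
          omega
  -- weight comparison between candidates
  have hwle : ∀ i i' : ℕ, i ≤ i' → wgt 𝕀 (Oor 𝕀 j μj Aj i) ≤ wgt 𝕀 (Oor 𝕀 j μj Aj i') := by
    intro i i' h
    unfold wgt
    apply Finset.sum_le_sum
    intro H _
    by_cases hP : j ∈ H.1 ∧ IsLeast (H.1 : Set ℕ) μj
    · rw [(hOval i H).1 hP, (hOval i' H).1 hP]; exact h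
    · rw [(hOval i H).2 hP, (hOval i' H).2 hP]
  -- the set of free elements and its maximum
  set F : Finset ℕ := (Finset.Ico μj j).filter
    (fun m => ∀ K ∈ 𝕀, (∀ x ∈ K, μj ≤ x ∧ x < j) → m ∈ K → ∀ y ∈ K, m ≤ y) with hF
  have hFmem : ∀ m, m ∈ F ↔ (μj ≤ m ∧ m < j ∧
      ∀ K ∈ 𝕀, (∀ x ∈ K, μj ≤ x ∧ x < j) → m ∈ K → ∀ y ∈ K, m ≤ y) := by
    intro m
    rw [hF, Finset.mem_filter, Finset.mem_Ico]
    tauto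
  have hμF : μj ∈ F := (hFmem μj).mpr ⟨le_rfl, hμj_lt, fun K _ hbd _ y hy => (hbd y hy).1⟩
  set istar := F.max' ⟨μj, hμF⟩ with histar
  have hiF := (hFmem istar).mp (F.max'_mem ⟨μj, hμF⟩)
  have hmax : ∀ m ∈ F, m ≤ istar := fun m hm => F.le_max' m hm
  have hBflip := hflipAj istar hiF.1 hiF.2.1 hiF.2.2
  have hBAlt : ltP n 𝕀 (Oor 𝕀 j μj Aj istar) Aj :=
    ⟨Relation.ReflTransGen.single hBflip, hOAne istar (by omega)⟩
  refine ⟨⟨hAjOr, hAjAc⟩, ?_, ?_⟩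
  · intro hall
    have h1 := wgt_le_of_leP (hall (Oor 𝕀 j μj Aj μj)
      (hOfree μj le_rfl hμj_lt (fun K _ hbd _ y hy => (hbd y hy).1)))
    have h2 := wgt_lt_of_flip' (hflipAj μj le_rfl hμj_lt (fun K _ hbd _ y hy => (hbd y hy).1))
    omega
  · refine ⟨Oor 𝕀 j μj Aj istar, ⟨hOfree istar hiF.1 hiF.2.1 hiF.2.2, hBAlt, ?_⟩, ?_⟩
    · rintro ⟨C, hCac, hBC, hCA⟩
      obtain ⟨hCAle, hCAne⟩ := hCA
      rcases Relation.ReflTransGen.cases_tail hCAle with heq | ⟨D, hCD, hDA⟩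
      · exact hCAne heq.symm
      · obtain ⟨i', hFi', hDeq⟩ := hchar D hDA.1 hDA.2.2
        have h1 := wgt_lt_of_ltP hBC
        have h2 := wgt_le_of_leP hCD
        have h3 : i' ≤ istar := hmax i' ((hFmem i').mpr hFi')
        have h4 : wgt 𝕀 D ≤ wgt 𝕀 (Oor 𝕀 j μj Aj istar) := by
          rw [hDeq]; exact hwle i' istar h3
        omega
    · rintro B' ⟨hB'ac, ⟨hB'le, hB'ne⟩, hB'cov⟩
      rcases Relation.ReflTransGen.cases_tail hB'le with heq | ⟨D, hBD, hDA⟩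
      · exact absurd heq.symm hB'ne
      · obtain ⟨i', hFi', hDeq⟩ := hchar D hDA.1 hDA.2.2
        have hDAne : D ≠ Aj := by rw [hDeq]; exact hOAne i' (by omega)
        have hBD' : B' = D := by
          by_contra hne'
          exact hB'cov ⟨D, hDA.1, ⟨hBD, hne'⟩, Relation.ReflTransGen.single hDA, hDAne⟩
        have hii : i' = istar := by
          by_contra hne'
          have hlt : i' < istar := lt_of_le_of_ne (hmax i' ((hFmem i').mpr hFi')) hne'
          apply hB'cov
          refine ⟨Oor 𝕀 j μj Aj istar, hOfree istar hiF.1 hiF.2.1 hiF.2.2, ?_, hBAlt⟩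
          constructor
          · rw [hBD', hDeq]
            exact Relation.ReflTransGen.single
              (hflip2 i' istar hFi'.1 hFi'.2.1 hiF.1 hiF.2.1 hFi'.2.2 hiF.2.2 hlt)
          · rw [hBD', hDeq]
            exact hOne i' istar (by omega)
        rw [hBD', hDeq, hii]
end IHL
end
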